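/- arXiv:2602.14274 — 10 statements merged into one kernel-verified Lean document; each statement's English description precedes it below -/
import Mathlib

section
/- Under the IRM with ML proxies, assume Var(θ̃(Z)) > 0 (i.e., g̃_1(Z) and g̃_0(Z) are not almost surely equal up to a constant shift, so that θ̃(Z) is non-degenerate). Then there is a unique pair (a₁, b₁) ∈ ℝ² satisfying the normal equations E[c(η̃) − a₁ − b₁(θ̃(Z) − E[θ̃(Z)])] = 0 and E[(c(η̃) − a₁ − b₁(θ̃(Z) − E[θ̃(Z)]))·(θ̃(Z) − E[θ̃(Z)])] = 0, and it is given by a₁ = E[θ(Z)] + E[bias₁] + E[bias₂] and b₁ = Cov(θ(Z), θ̃(Z))/Var(θ̃(Z)) + Cov(bias₁, θ̃(Z))/Var(θ̃(Z)) + Cov(bias₂, θ̃(Z))/Var(θ̃(Z)). -/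
open MeasureTheory ProbabilityTheory

private lemma l2_mul_l2 {Ω : Type*} [MeasurableSpace Ω] {P : Measure Ω} {f g : Ω → ℝ}
    (hf : MemLp f 2 P) (hg : MemLp g 2 P) : Integrable (fun ω => f ω * g ω) P := by
  have h : MemLp (f • g) 1 P := hg.smul hf
  rw [memLp_one_iff_integrable] at h
  exact h

private lemma memLp2_ite {Ω : Type*} [MeasurableSpace Ω] {P : Measure Ω} {T f g : Ω → ℝ}
    (hTm : Measurable T) (hfm : Measurable f) (hgm : Measurable g)
    (hf : MemLp f 2 P) (hg : MemLp g 2 P) :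
    MemLp (fun ω => if T ω = 1 then f ω else g ω) 2 P := by
  have hdom : MemLp (fun ω => ‖f ω‖ + ‖g ω‖) 2 P := hf.norm.add hg.norm
  refine MemLp.of_le hdom
    ((Measurable.ite (hTm (measurableSet_singleton 1)) hfm hgm).aestronglyMeasurable)
    (Filter.Eventually.of_forall fun ω => ?_)
  have h0 : (0:ℝ) ≤ ‖f ω‖ + ‖g ω‖ := by positivity
  rw [Real.norm_of_nonneg h0, Real.norm_eq_abs]
  split_ifs with h
  · calc |f ω| = ‖f ω‖ := rfl
      _ ≤ ‖f ω‖ + ‖g ω‖ := le_add_of_nonneg_right (norm_nonneg _)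
  · calc |g ω| = ‖g ω‖ := rfl
      _ ≤ ‖f ω‖ + ‖g ω‖ := le_add_of_nonneg_left (norm_nonneg _)

private lemma memLp2_bdd_mul {Ω : Type*} [MeasurableSpace Ω] {P : Measure Ω} {f g : Ω → ℝ}
    {C : ℝ} (hfm : AEStronglyMeasurable f P) (hg : MemLp g 2 P)
    (hbd : ∀ᵐ ω ∂P, |f ω| ≤ C) :
    MemLp (fun ω => f ω * g ω) 2 P := by
  refine MemLp.of_le_mul (c := C) hg (hfm.mul hg.aestronglyMeasurable) ?_
  filter_upwards [hbd] with ω h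
  rw [norm_mul]
  exact mul_le_mul_of_nonneg_right (by rwa [Real.norm_eq_abs]) (norm_nonneg _)

private lemma ht_abs_bd {Ω : Type*} [MeasurableSpace Ω] {P : Measure Ω}
    {𝓩 : Type*} [MeasurableSpace 𝓩] {T : Ω → ℝ} {Z : Ω → 𝓩} {pt : 𝓩 → ℝ} {ε : ℝ}
    (hTbin : ∀ ω, T ω = 0 ∨ T ω = 1) (hε0 : 0 < ε)
    (hptbd : ∀ᵐ ω ∂P, ε ≤ pt (Z ω) ∧ pt (Z ω) ≤ 1 - ε) :
    ∀ᵐ ω ∂P, |T ω / pt (Z ω) - (1 - T ω) / (1 - pt (Z ω))| ≤ 1 / ε := by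
  filter_upwards [hptbd] with ω hpt
  obtain ⟨h1, h2⟩ := hpt
  have hpt0 : 0 < pt (Z ω) := lt_of_lt_of_le hε0 h1
  have hpt1 : 0 < 1 - pt (Z ω) := by linarith
  rcases hTbin ω with h | h
  · have he : T ω / pt (Z ω) - (1 - T ω) / (1 - pt (Z ω)) = -(1 / (1 - pt (Z ω))) := by
      rw [h, zero_div, sub_zero, zero_sub]
    rw [he, abs_neg, abs_of_nonneg (div_nonneg zero_le_one hpt1.le)]
    exact one_div_le_one_div_of_le hε0 (by linarith)
  · have he : T ω / pt (Z ω) - (1 - T ω) / (1 - pt (Z ω)) = 1 / pt (Z ω) := by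
      rw [h, sub_self, zero_div, sub_zero]
    rw [he, abs_of_nonneg (div_nonneg zero_le_one hpt0.le)]
    exact one_div_le_one_div_of_le hε0 h1

private lemma blp_key
    {Ω : Type*} [MeasurableSpace Ω] (P : Measure Ω) [IsProbabilityMeasure P]
    {𝓩 : Type*} [MeasurableSpace 𝓩]
    (Y T : Ω → ℝ) (Z : Ω → 𝓩)
    (hYm : Measurable Y) (hTm : Measurable T) (hZm : Measurable Z)
    (hTbin : ∀ ω, T ω = 0 ∨ T ω = 1)
    (g0 g1 p : 𝓩 → ℝ) (hg0m : Measurable g0) (hg1m : Measurable g1) (hpm : Measurable p)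
    (hU : MeasureTheory.condExp
        (MeasurableSpace.comap (fun ω => (T ω, Z ω)) inferInstance) P
        (fun ω => Y ω - (if T ω = 1 then g1 (Z ω) else g0 (Z ω))) =ᵐ[P] 0)
    (hprop : (fun ω => p (Z ω)) =ᵐ[P]
        MeasureTheory.condExp (MeasurableSpace.comap Z inferInstance) P T)
    (hpbd : ∀ᵐ ω ∂P, 0 < p (Z ω) ∧ p (Z ω) < 1)
    (gt0 gt1 pt : 𝓩 → ℝ)
    (hgt0m : Measurable gt0) (hgt1m : Measurable gt1) (hptm : Measurable pt)
    (ε : ℝ) (hε0 : 0 < ε) (hε1 : ε < 1 / 2)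
    (hptbd : ∀ᵐ ω ∂P, ε ≤ pt (Z ω) ∧ pt (Z ω) ≤ 1 - ε)
    (hY2 : MemLp Y 2 P)
    (hg02 : MemLp (fun ω => g0 (Z ω)) 2 P) (hg12 : MemLp (fun ω => g1 (Z ω)) 2 P)
    (hgt02 : MemLp (fun ω => gt0 (Z ω)) 2 P) (hgt12 : MemLp (fun ω => gt1 (Z ω)) 2 P)
    (ψ : 𝓩 → ℝ) (hψm : Measurable ψ) (hψ2 : MemLp (fun ω => ψ (Z ω)) 2 P) :
    ∫ ω, (gt1 (Z ω) - gt0 (Z ω) +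
        (T ω / pt (Z ω) - (1 - T ω) / (1 - pt (Z ω))) *
          (Y ω - (if T ω = 1 then gt1 (Z ω) else gt0 (Z ω)))) * ψ (Z ω) ∂P
    = ∫ ω, (g1 (Z ω) - g0 (Z ω) +
        ((p (Z ω) / pt (Z ω) - 1) * (g1 (Z ω) - gt1 (Z ω)) +
        (1 - (1 - p (Z ω)) / (1 - pt (Z ω))) * (g0 (Z ω) - gt0 (Z ω)))) * ψ (Z ω) ∂P := by
  have hφm : Measurable fun ω => ψ (Z ω) := hψm.comp hZm
  have hptZm : Measurable fun ω => pt (Z ω) := hptm.comp hZm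
  have hHtm : Measurable fun ω => T ω / pt (Z ω) - (1 - T ω) / (1 - pt (Z ω)) :=
    (hTm.div hptZm).sub ((measurable_const.sub hTm).div (measurable_const.sub hptZm))
  have hHtbd := ht_abs_bd (P := P) (pt := pt) hTbin hε0 hptbd
  -- square integrability of the residual U
  have hU2 : MemLp (fun ω => Y ω - if T ω = 1 then g1 (Z ω) else g0 (Z ω)) 2 P :=
    hY2.sub (memLp2_ite hTm (hg1m.comp hZm) (hg0m.comp hZm) hg12 hg02)
  have hUi : Integrable (fun ω => Y ω - if T ω = 1 then g1 (Z ω) else g0 (Z ω)) P :=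
    hU2.integrable one_le_two
  -- Ht * ψ∘Z is in L2
  have hHtφ2 : MemLp
      (fun ω => (T ω / pt (Z ω) - (1 - T ω) / (1 - pt (Z ω))) * ψ (Z ω)) 2 P :=
    memLp2_bdd_mul hHtm.aestronglyMeasurable hψ2 hHtbd
  -- integrable pieces
  have hf1 : Integrable (fun ω => (gt1 (Z ω) - gt0 (Z ω)) * ψ (Z ω)) P :=
    l2_mul_l2 (hgt12.sub hgt02) hψ2
  have hf2 : Integrable (fun ω =>
      ((T ω / pt (Z ω) - (1 - T ω) / (1 - pt (Z ω))) * ψ (Z ω)) *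
        (Y ω - if T ω = 1 then g1 (Z ω) else g0 (Z ω))) P :=
    l2_mul_l2 hHtφ2 hU2
  have hinvpt : ∀ᵐ ω ∂P, ‖(pt (Z ω))⁻¹‖ ≤ 1 / ε := by
    filter_upwards [hptbd] with ω hpt
    obtain ⟨h1, h2⟩ := hpt
    have hpt0 : 0 < pt (Z ω) := lt_of_lt_of_le hε0 h1
    rw [Real.norm_eq_abs, abs_of_nonneg (inv_nonneg.mpr hpt0.le), one_div]
    exact inv_anti₀ hε0 h1
  have hinv1pt : ∀ᵐ ω ∂P, ‖(1 - pt (Z ω))⁻¹‖ ≤ 1 / ε := by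
    filter_upwards [hptbd] with ω hpt
    obtain ⟨h1, h2⟩ := hpt
    have hpt1 : 0 < 1 - pt (Z ω) := by linarith
    rw [Real.norm_eq_abs, abs_of_nonneg (inv_nonneg.mpr hpt1.le), one_div]
    exact inv_anti₀ hε0 (by linarith)
  have haZ : Integrable (fun ω => (pt (Z ω))⁻¹ * ((g1 (Z ω) - gt1 (Z ω)) * ψ (Z ω))) P :=
    Integrable.bdd_mul (l2_mul_l2 (hg12.sub hgt12) hψ2)
      hptZm.inv.aestronglyMeasurable hinvpt
  have hbZ : Integrable (fun ω => (1 - pt (Z ω))⁻¹ * ((g0 (Z ω) - gt0 (Z ω)) * ψ (Z ω))) P :=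
    Integrable.bdd_mul (l2_mul_l2 (hg02.sub hgt02) hψ2)
      (measurable_const.sub hptZm).inv.aestronglyMeasurable hinv1pt
  have hTbd : ∀ ω, ‖T ω‖ ≤ 1 := fun ω => by rcases hTbin ω with h | h <;> simp [h]
  have hTi : Integrable T P := by
    have h2 : MemLp T 2 P := MemLp.of_le (memLp_const (1 : ℝ)) hTm.aestronglyMeasurable
      (Filter.Eventually.of_forall fun ω => by simpa using hTbd ω)
    exact h2.integrable one_le_two
  have haZT : Integrable (fun ω =>
      (pt (Z ω))⁻¹ * ((g1 (Z ω) - gt1 (Z ω)) * ψ (Z ω)) * T ω) P :=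
    (Integrable.bdd_mul haZ hTm.aestronglyMeasurable
      (Filter.Eventually.of_forall hTbd)).congr
        (Filter.Eventually.of_forall fun ω => mul_comm _ _)
  have hbZT : Integrable (fun ω =>
      (1 - pt (Z ω))⁻¹ * ((g0 (Z ω) - gt0 (Z ω)) * ψ (Z ω)) * T ω) P :=
    (Integrable.bdd_mul hbZ hTm.aestronglyMeasurable
      (Filter.Eventually.of_forall hTbd)).congr
        (Filter.Eventually.of_forall fun ω => mul_comm _ _)
  have hpZbd : ∀ᵐ ω ∂P, ‖p (Z ω)‖ ≤ 1 := by
    filter_upwards [hpbd] with ω h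
    rw [Real.norm_eq_abs, abs_of_pos h.1]
    exact h.2.le
  have haZp : Integrable (fun ω =>
      (pt (Z ω))⁻¹ * ((g1 (Z ω) - gt1 (Z ω)) * ψ (Z ω)) * p (Z ω)) P :=
    (Integrable.bdd_mul haZ (hpm.comp hZm).aestronglyMeasurable hpZbd).congr
      (Filter.Eventually.of_forall fun ω => mul_comm _ _)
  have hbZp : Integrable (fun ω =>
      (1 - pt (Z ω))⁻¹ * ((g0 (Z ω) - gt0 (Z ω)) * ψ (Z ω)) * p (Z ω)) P :=
    (Integrable.bdd_mul hbZ (hpm.comp hZm).aestronglyMeasurable hpZbd).congr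
      (Filter.Eventually.of_forall fun ω => mul_comm _ _)
  -- the pull-out argument for the propensity score
  have hm1 : MeasurableSpace.comap Z inferInstance ≤ (inferInstance : MeasurableSpace Ω) :=
    hZm.comap_le
  haveI : IsFiniteMeasure (P.trim hm1) := isFiniteMeasure_trim hm1
  have pull : ∀ f : Ω → ℝ, Measurable[MeasurableSpace.comap Z inferInstance] f →
      Integrable f P → ∫ ω, f ω * T ω ∂P = ∫ ω, f ω * p (Z ω) ∂P := by
    intro f hfm hfi
    have hfT : Integrable (f * T) P :=
      (Integrable.bdd_mul hfi hTm.aestronglyMeasurable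
        (Filter.Eventually.of_forall hTbd)).congr
          (Filter.Eventually.of_forall fun ω => mul_comm _ _)
    have hmul := condExp_mul_of_stronglyMeasurable_left hfm.stronglyMeasurable hfT hTi
    calc ∫ ω, f ω * T ω ∂P
        = ∫ ω, MeasureTheory.condExp (MeasurableSpace.comap Z inferInstance) P (f * T) ω ∂P :=
          (integral_condExp hm1).symm
      _ = ∫ ω, (f * MeasureTheory.condExp (MeasurableSpace.comap Z inferInstance) P T) ω ∂P :=
          integral_congr_ae hmul
      _ = ∫ ω, f ω * p (Z ω) ∂P := by
          refine integral_congr_ae ?_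
          filter_upwards [hprop] with ω h
          simp only [Pi.mul_apply]
          rw [← h]
  -- the conditional-mean-zero argument for the outcome residual
  have hm2 : MeasurableSpace.comap (fun ω => (T ω, Z ω)) inferInstance ≤
      (inferInstance : MeasurableSpace Ω) := (hTm.prodMk hZm).comap_le
  haveI : IsFiniteMeasure (P.trim hm2) := isFiniteMeasure_trim hm2
  have hsm2 : StronglyMeasurable[MeasurableSpace.comap (fun ω => (T ω, Z ω)) inferInstance]
      (fun ω => (T ω / pt (Z ω) - (1 - T ω) / (1 - pt (Z ω))) * ψ (Z ω)) := by
    have hFm : Measurable fun q : ℝ × 𝓩 =>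
        (q.1 / pt q.2 - (1 - q.1) / (1 - pt q.2)) * ψ q.2 :=
      ((measurable_fst.div (hptm.comp measurable_snd)).sub
        ((measurable_const.sub measurable_fst).div
          (measurable_const.sub (hptm.comp measurable_snd)))).mul (hψm.comp measurable_snd)
    exact (hFm.comp (measurable_iff_comap_le.mpr le_rfl)).stronglyMeasurable
  have hzero : ∫ ω, ((T ω / pt (Z ω) - (1 - T ω) / (1 - pt (Z ω))) * ψ (Z ω)) *
      (Y ω - if T ω = 1 then g1 (Z ω) else g0 (Z ω)) ∂P = 0 := by
    have hfg : Integrable ((fun ω => (T ω / pt (Z ω) - (1 - T ω) / (1 - pt (Z ω))) * ψ (Z ω)) *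
        (fun ω => Y ω - if T ω = 1 then g1 (Z ω) else g0 (Z ω))) P := hf2
    have hmul := condExp_mul_of_stronglyMeasurable_left hsm2 hfg hUi
    have h0 : ((fun ω => (T ω / pt (Z ω) - (1 - T ω) / (1 - pt (Z ω))) * ψ (Z ω)) *
        MeasureTheory.condExp (MeasurableSpace.comap (fun ω => (T ω, Z ω)) inferInstance) P
          (fun ω => Y ω - if T ω = 1 then g1 (Z ω) else g0 (Z ω))) =ᵐ[P] 0 := by
      filter_upwards [hU] with ω h
      simp only [Pi.mul_apply, Pi.zero_apply] at h ⊢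
      rw [h, mul_zero]
    calc ∫ ω, ((T ω / pt (Z ω) - (1 - T ω) / (1 - pt (Z ω))) * ψ (Z ω)) *
          (Y ω - if T ω = 1 then g1 (Z ω) else g0 (Z ω)) ∂P
        = ∫ ω, MeasureTheory.condExp
            (MeasurableSpace.comap (fun ω => (T ω, Z ω)) inferInstance) P
            ((fun ω => (T ω / pt (Z ω) - (1 - T ω) / (1 - pt (Z ω))) * ψ (Z ω)) *
              (fun ω => Y ω - if T ω = 1 then g1 (Z ω) else g0 (Z ω))) ω ∂P :=
          (integral_condExp hm2).symm
      _ = ∫ ω, ((fun ω => (T ω / pt (Z ω) - (1 - T ω) / (1 - pt (Z ω))) * ψ (Z ω)) *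
            MeasureTheory.condExp (MeasurableSpace.comap (fun ω => (T ω, Z ω)) inferInstance) P
              (fun ω => Y ω - if T ω = 1 then g1 (Z ω) else g0 (Z ω))) ω ∂P :=
          integral_congr_ae hmul
      _ = ∫ ω, (0 : Ω → ℝ) ω ∂P := integral_congr_ae h0
      _ = 0 := by simp
  -- measurability w.r.t. σ(Z)
  have haZm1 : Measurable[MeasurableSpace.comap Z inferInstance]
      fun ω => (pt (Z ω))⁻¹ * ((g1 (Z ω) - gt1 (Z ω)) * ψ (Z ω)) := by
    have h : Measurable fun z => (pt z)⁻¹ * ((g1 z - gt1 z) * ψ z) :=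
      hptm.inv.mul ((hg1m.sub hgt1m).mul hψm)
    exact h.comp (measurable_iff_comap_le.mpr le_rfl)
  have hbZm1 : Measurable[MeasurableSpace.comap Z inferInstance]
      fun ω => (1 - pt (Z ω))⁻¹ * ((g0 (Z ω) - gt0 (Z ω)) * ψ (Z ω)) := by
    have h : Measurable fun z => (1 - pt z)⁻¹ * ((g0 z - gt0 z) * ψ z) :=
      (measurable_const.sub hptm).inv.mul ((hg0m.sub hgt0m).mul hψm)
    exact h.comp (measurable_iff_comap_le.mpr le_rfl)
  have hpullA : ∫ ω, (pt (Z ω))⁻¹ * ((g1 (Z ω) - gt1 (Z ω)) * ψ (Z ω)) * T ω ∂P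
      = ∫ ω, (pt (Z ω))⁻¹ * ((g1 (Z ω) - gt1 (Z ω)) * ψ (Z ω)) * p (Z ω) ∂P :=
    pull _ haZm1 haZ
  have hpullB : ∫ ω, (1 - pt (Z ω))⁻¹ * ((g0 (Z ω) - gt0 (Z ω)) * ψ (Z ω)) * T ω ∂P
      = ∫ ω, (1 - pt (Z ω))⁻¹ * ((g0 (Z ω) - gt0 (Z ω)) * ψ (Z ω)) * p (Z ω) ∂P :=
    pull _ hbZm1 hbZ
  have hDE : Integrable (fun ω =>
      (1 - pt (Z ω))⁻¹ * ((g0 (Z ω) - gt0 (Z ω)) * ψ (Z ω)) * T ω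
        - (1 - pt (Z ω))⁻¹ * ((g0 (Z ω) - gt0 (Z ω)) * ψ (Z ω))) P := hbZT.sub hbZ
  have hCDE : Integrable (fun ω =>
      (pt (Z ω))⁻¹ * ((g1 (Z ω) - gt1 (Z ω)) * ψ (Z ω)) * T ω
        + ((1 - pt (Z ω))⁻¹ * ((g0 (Z ω) - gt0 (Z ω)) * ψ (Z ω)) * T ω
          - (1 - pt (Z ω))⁻¹ * ((g0 (Z ω) - gt0 (Z ω)) * ψ (Z ω)))) P := haZT.add hDE
  have hf12 : Integrable (fun ω => (gt1 (Z ω) - gt0 (Z ω)) * ψ (Z ω)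
      + ((T ω / pt (Z ω) - (1 - T ω) / (1 - pt (Z ω))) * ψ (Z ω)) *
          (Y ω - if T ω = 1 then g1 (Z ω) else g0 (Z ω))) P := hf1.add hf2
  have hDE' : Integrable (fun ω =>
      (1 - pt (Z ω))⁻¹ * ((g0 (Z ω) - gt0 (Z ω)) * ψ (Z ω)) * p (Z ω)
        - (1 - pt (Z ω))⁻¹ * ((g0 (Z ω) - gt0 (Z ω)) * ψ (Z ω))) P := hbZp.sub hbZ
  have hCDE' : Integrable (fun ω =>
      (pt (Z ω))⁻¹ * ((g1 (Z ω) - gt1 (Z ω)) * ψ (Z ω)) * p (Z ω)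
        + ((1 - pt (Z ω))⁻¹ * ((g0 (Z ω) - gt0 (Z ω)) * ψ (Z ω)) * p (Z ω)
          - (1 - pt (Z ω))⁻¹ * ((g0 (Z ω) - gt0 (Z ω)) * ψ (Z ω)))) P := haZp.add hDE'
  -- pointwise decomposition of the left-hand integrand
  have hsplit : ∀ ω, (gt1 (Z ω) - gt0 (Z ω) +
      (T ω / pt (Z ω) - (1 - T ω) / (1 - pt (Z ω))) *
        (Y ω - (if T ω = 1 then gt1 (Z ω) else gt0 (Z ω)))) * ψ (Z ω)
      = (gt1 (Z ω) - gt0 (Z ω)) * ψ (Z ω)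
        + ((T ω / pt (Z ω) - (1 - T ω) / (1 - pt (Z ω))) * ψ (Z ω)) *
            (Y ω - if T ω = 1 then g1 (Z ω) else g0 (Z ω))
        + ((pt (Z ω))⁻¹ * ((g1 (Z ω) - gt1 (Z ω)) * ψ (Z ω)) * T ω
          + ((1 - pt (Z ω))⁻¹ * ((g0 (Z ω) - gt0 (Z ω)) * ψ (Z ω)) * T ω
            - (1 - pt (Z ω))⁻¹ * ((g0 (Z ω) - gt0 (Z ω)) * ψ (Z ω)))) := by
    intro ω
    rcases hTbin ω with h | h
    · rw [if_neg (by rw [h]; norm_num), if_neg (by rw [h]; norm_num), h]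
      simp only [div_eq_mul_inv]
      ring
    · rw [if_pos h, if_pos h, h]
      simp only [div_eq_mul_inv]
      ring
  calc ∫ ω, (gt1 (Z ω) - gt0 (Z ω) +
        (T ω / pt (Z ω) - (1 - T ω) / (1 - pt (Z ω))) *
          (Y ω - (if T ω = 1 then gt1 (Z ω) else gt0 (Z ω)))) * ψ (Z ω) ∂P
      = ∫ ω, ((gt1 (Z ω) - gt0 (Z ω)) * ψ (Z ω)
        + ((T ω / pt (Z ω) - (1 - T ω) / (1 - pt (Z ω))) * ψ (Z ω)) *
            (Y ω - if T ω = 1 then g1 (Z ω) else g0 (Z ω))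
        + ((pt (Z ω))⁻¹ * ((g1 (Z ω) - gt1 (Z ω)) * ψ (Z ω)) * T ω
          + ((1 - pt (Z ω))⁻¹ * ((g0 (Z ω) - gt0 (Z ω)) * ψ (Z ω)) * T ω
            - (1 - pt (Z ω))⁻¹ * ((g0 (Z ω) - gt0 (Z ω)) * ψ (Z ω))))) ∂P :=
        integral_congr_ae (Filter.Eventually.of_forall hsplit)
    _ = (∫ ω, (gt1 (Z ω) - gt0 (Z ω)) * ψ (Z ω) ∂P)
        + (∫ ω, ((T ω / pt (Z ω) - (1 - T ω) / (1 - pt (Z ω))) * ψ (Z ω)) *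
            (Y ω - if T ω = 1 then g1 (Z ω) else g0 (Z ω)) ∂P)
        + ((∫ ω, (pt (Z ω))⁻¹ * ((g1 (Z ω) - gt1 (Z ω)) * ψ (Z ω)) * T ω ∂P)
          + ((∫ ω, (1 - pt (Z ω))⁻¹ * ((g0 (Z ω) - gt0 (Z ω)) * ψ (Z ω)) * T ω ∂P)
            - (∫ ω, (1 - pt (Z ω))⁻¹ * ((g0 (Z ω) - gt0 (Z ω)) * ψ (Z ω)) ∂P))) := by
        rw [integral_add hf12 hCDE, integral_add hf1 hf2,
          integral_add haZT hDE, integral_sub hbZT hbZ]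
    _ = (∫ ω, (gt1 (Z ω) - gt0 (Z ω)) * ψ (Z ω) ∂P)
        + ((∫ ω, (pt (Z ω))⁻¹ * ((g1 (Z ω) - gt1 (Z ω)) * ψ (Z ω)) * p (Z ω) ∂P)
          + ((∫ ω, (1 - pt (Z ω))⁻¹ * ((g0 (Z ω) - gt0 (Z ω)) * ψ (Z ω)) * p (Z ω) ∂P)
            - (∫ ω, (1 - pt (Z ω))⁻¹ * ((g0 (Z ω) - gt0 (Z ω)) * ψ (Z ω)) ∂P))) := by
        rw [hzero, add_zero, hpullA, hpullB]
    _ = ∫ ω, ((gt1 (Z ω) - gt0 (Z ω)) * ψ (Z ω)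
        + ((pt (Z ω))⁻¹ * ((g1 (Z ω) - gt1 (Z ω)) * ψ (Z ω)) * p (Z ω)
          + ((1 - pt (Z ω))⁻¹ * ((g0 (Z ω) - gt0 (Z ω)) * ψ (Z ω)) * p (Z ω)
            - (1 - pt (Z ω))⁻¹ * ((g0 (Z ω) - gt0 (Z ω)) * ψ (Z ω))))) ∂P := by
        rw [← integral_sub hbZp hbZ, ← integral_add haZp hDE',
          ← integral_add hf1 hCDE']
    _ = ∫ ω, (g1 (Z ω) - g0 (Z ω) +
        ((p (Z ω) / pt (Z ω) - 1) * (g1 (Z ω) - gt1 (Z ω)) +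
        (1 - (1 - p (Z ω)) / (1 - pt (Z ω))) * (g0 (Z ω) - gt0 (Z ω)))) * ψ (Z ω) ∂P := by
        refine integral_congr_ae ?_
        filter_upwards [hptbd] with ω hpt
        obtain ⟨h1, h2⟩ := hpt
        have h0 : pt (Z ω) ≠ 0 := ne_of_gt (lt_of_lt_of_le hε0 h1)
        have h1' : (1 : ℝ) - pt (Z ω) ≠ 0 := ne_of_gt (by linarith)
        field_simp
        ring

theorem blp_normal_equations_solution
    {Ω : Type*} [MeasurableSpace Ω] (P : Measure Ω) [IsProbabilityMeasure P]
    {𝓩 : Type*} [MeasurableSpace 𝓩]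
    (Y T : Ω → ℝ) (Z : Ω → 𝓩)
    (hYm : Measurable Y) (hTm : Measurable T) (hZm : Measurable Z)
    (hTbin : ∀ ω, T ω = 0 ∨ T ω = 1)
    (g0 g1 p : 𝓩 → ℝ) (hg0m : Measurable g0) (hg1m : Measurable g1) (hpm : Measurable p)
    (hU : MeasureTheory.condExp
        (MeasurableSpace.comap (fun ω => (T ω, Z ω)) inferInstance) P
        (fun ω => Y ω - (if T ω = 1 then g1 (Z ω) else g0 (Z ω))) =ᵐ[P] 0)
    (hprop : (fun ω => p (Z ω)) =ᵐ[P]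
        MeasureTheory.condExp (MeasurableSpace.comap Z inferInstance) P T)
    (hpbd : ∀ᵐ ω ∂P, 0 < p (Z ω) ∧ p (Z ω) < 1)
    (gt0 gt1 pt : 𝓩 → ℝ)
    (hgt0m : Measurable gt0) (hgt1m : Measurable gt1) (hptm : Measurable pt)
    (ε : ℝ) (hε0 : 0 < ε) (hε1 : ε < 1 / 2)
    (hptbd : ∀ᵐ ω ∂P, ε ≤ pt (Z ω) ∧ pt (Z ω) ≤ 1 - ε)
    (θ : Ω → ℝ) (hθ : θ = fun ω => g1 (Z ω) - g0 (Z ω))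
    (θt : Ω → ℝ) (hθt : θt = fun ω => gt1 (Z ω) - gt0 (Z ω))
    (Ht : Ω → ℝ) (hHt : Ht = fun ω => T ω / pt (Z ω) - (1 - T ω) / (1 - pt (Z ω)))
    (c : Ω → ℝ)
    (hc : c = fun ω => gt1 (Z ω) - gt0 (Z ω) +
      Ht ω * (Y ω - (if T ω = 1 then gt1 (Z ω) else gt0 (Z ω))))
    (bias1 bias2 : Ω → ℝ)
    (hbias1 : bias1 = fun ω => (p (Z ω) / pt (Z ω) - 1) * (g1 (Z ω) - gt1 (Z ω)))
    (hbias2 : bias2 = fun ω =>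
      (1 - (1 - p (Z ω)) / (1 - pt (Z ω))) * (g0 (Z ω) - gt0 (Z ω)))
    (cov : (Ω → ℝ) → (Ω → ℝ) → ℝ)
    (hcov : ∀ f g : Ω → ℝ, cov f g =
      ∫ ω, (f ω - ∫ m, f m ∂P) * (g ω - ∫ m, g m ∂P) ∂P)
    (hY2 : MemLp Y 2 P)
    (hg02 : MemLp (fun ω => g0 (Z ω)) 2 P) (hg12 : MemLp (fun ω => g1 (Z ω)) 2 P)
    (hgt02 : MemLp (fun ω => gt0 (Z ω)) 2 P) (hgt12 : MemLp (fun ω => gt1 (Z ω)) 2 P)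
    (hvar : 0 < cov θt θt)
    :
    ∀ a b : ℝ,
      ((∫ ω, (c ω - a - b * (θt ω - ∫ m, θt m ∂P)) ∂P = 0) ∧
        (∫ ω, (c ω - a - b * (θt ω - ∫ m, θt m ∂P)) * (θt ω - ∫ m, θt m ∂P) ∂P = 0))
      ↔ (a = (∫ ω, θ ω ∂P) + (∫ ω, bias1 ω ∂P) + (∫ ω, bias2 ω ∂P) ∧
          b = cov θ θt / cov θt θt + cov bias1 θt / cov θt θt +
              cov bias2 θt / cov θt θt) := by
  subst hθ hθt hbias1 hbias2 hHt hc
  simp only [hcov] at hvar ⊢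
  intro a b
  -- basic L² facts
  have hθt2 : MemLp (fun ω => gt1 (Z ω) - gt0 (Z ω)) 2 P := hgt12.sub hgt02
  have hθti : Integrable (fun ω => gt1 (Z ω) - gt0 (Z ω)) P := hθt2.integrable one_le_two
  set M : ℝ := ∫ m, gt1 (Z m) - gt0 (Z m) ∂P with hM
  have hψ22 : MemLp (fun ω => gt1 (Z ω) - gt0 (Z ω) - M) 2 P := hθt2.sub (memLp_const M)
  have hθtMi : Integrable (fun ω => gt1 (Z ω) - gt0 (Z ω) - M) P := hψ22.integrable one_le_two
  have hmean0 : ∫ ω, (gt1 (Z ω) - gt0 (Z ω) - M) ∂P = 0 := by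
    rw [integral_sub hθti (integrable_const M), integral_const, ← hM]
    simp
  have hθ2 : MemLp (fun ω => g1 (Z ω) - g0 (Z ω)) 2 P := hg12.sub hg02
  have hθi : Integrable (fun ω => g1 (Z ω) - g0 (Z ω)) P := hθ2.integrable one_le_two
  -- bias terms are in L²
  have hb12 : MemLp (fun ω => (p (Z ω) / pt (Z ω) - 1) * (g1 (Z ω) - gt1 (Z ω))) 2 P := by
    refine memLp2_bdd_mul (C := 1 / ε + 1)
      (((hpm.comp hZm).div (hptm.comp hZm)).sub measurable_const).aestronglyMeasurable
      (hg12.sub hgt12) ?_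
    filter_upwards [hpbd, hptbd] with ω hp hpt
    have hpt0 : 0 < pt (Z ω) := lt_of_lt_of_le hε0 hpt.1
    have hr0 : 0 ≤ p (Z ω) / pt (Z ω) := div_nonneg hp.1.le hpt0.le
    have hr1 : p (Z ω) / pt (Z ω) ≤ 1 / ε := div_le_div₀ zero_le_one hp.2.le hε0 hpt.1
    rw [abs_le]
    have h1e : 0 ≤ 1 / ε := by positivity
    constructor <;> linarith
  have hb22 : MemLp
      (fun ω => (1 - (1 - p (Z ω)) / (1 - pt (Z ω))) * (g0 (Z ω) - gt0 (Z ω))) 2 P := by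
    refine memLp2_bdd_mul (C := 1 + 1 / ε)
      (measurable_const.sub ((measurable_const.sub (hpm.comp hZm)).div
        (measurable_const.sub (hptm.comp hZm)))).aestronglyMeasurable
      (hg02.sub hgt02) ?_
    filter_upwards [hpbd, hptbd] with ω hp hpt
    have hpt1 : 0 < 1 - pt (Z ω) := by have := hpt.2; linarith
    have hr0 : 0 ≤ (1 - p (Z ω)) / (1 - pt (Z ω)) :=
      div_nonneg (by linarith [hp.2]) hpt1.le
    have hr1 : (1 - p (Z ω)) / (1 - pt (Z ω)) ≤ 1 / ε :=
      div_le_div₀ zero_le_one (by linarith [hp.1]) hε0 (by linarith [hpt.2])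
    rw [abs_le]
    have h1e : 0 ≤ 1 / ε := by positivity
    constructor <;> linarith
  have hb1i : Integrable (fun ω => (p (Z ω) / pt (Z ω) - 1) * (g1 (Z ω) - gt1 (Z ω))) P :=
    hb12.integrable one_le_two
  have hb2i : Integrable
      (fun ω => (1 - (1 - p (Z ω)) / (1 - pt (Z ω))) * (g0 (Z ω) - gt0 (Z ω))) P :=
    hb22.integrable one_le_two
  -- c is in L²
  have hc2 : MemLp (fun ω => gt1 (Z ω) - gt0 (Z ω) +
      (T ω / pt (Z ω) - (1 - T ω) / (1 - pt (Z ω))) *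
        (Y ω - if T ω = 1 then gt1 (Z ω) else gt0 (Z ω))) 2 P := by
    have hW2 : MemLp (fun ω => Y ω - if T ω = 1 then gt1 (Z ω) else gt0 (Z ω)) 2 P :=
      hY2.sub (memLp2_ite hTm (hgt1m.comp hZm) (hgt0m.comp hZm) hgt12 hgt02)
    have hHtm : Measurable fun ω => T ω / pt (Z ω) - (1 - T ω) / (1 - pt (Z ω)) :=
      (hTm.div (hptm.comp hZm)).sub
        ((measurable_const.sub hTm).div (measurable_const.sub (hptm.comp hZm)))
    exact hθt2.add (memLp2_bdd_mul hHtm.aestronglyMeasurable hW2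
      (ht_abs_bd (P := P) (pt := pt) hTbin hε0 hptbd))
  have hci : Integrable (fun ω => gt1 (Z ω) - gt0 (Z ω) +
      (T ω / pt (Z ω) - (1 - T ω) / (1 - pt (Z ω))) *
        (Y ω - if T ω = 1 then gt1 (Z ω) else gt0 (Z ω))) P := hc2.integrable one_le_two
  -- instantiate the key identity with ψ ≡ 1
  have k1 : ∫ ω, (gt1 (Z ω) - gt0 (Z ω) +
      (T ω / pt (Z ω) - (1 - T ω) / (1 - pt (Z ω))) *
        (Y ω - if T ω = 1 then gt1 (Z ω) else gt0 (Z ω))) ∂P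
      = (∫ ω, (g1 (Z ω) - g0 (Z ω)) ∂P)
        + ((∫ ω, (p (Z ω) / pt (Z ω) - 1) * (g1 (Z ω) - gt1 (Z ω)) ∂P)
          + (∫ ω, (1 - (1 - p (Z ω)) / (1 - pt (Z ω))) * (g0 (Z ω) - gt0 (Z ω)) ∂P)) := by
    have h : ∫ ω, (gt1 (Z ω) - gt0 (Z ω) +
        (T ω / pt (Z ω) - (1 - T ω) / (1 - pt (Z ω))) *
          (Y ω - if T ω = 1 then gt1 (Z ω) else gt0 (Z ω))) * (1 : ℝ) ∂P
        = ∫ ω, (g1 (Z ω) - g0 (Z ω) +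
          ((p (Z ω) / pt (Z ω) - 1) * (g1 (Z ω) - gt1 (Z ω)) +
          (1 - (1 - p (Z ω)) / (1 - pt (Z ω))) * (g0 (Z ω) - gt0 (Z ω)))) * (1 : ℝ) ∂P :=
      blp_key P Y T Z hYm hTm hZm hTbin g0 g1 p hg0m hg1m hpm hU hprop hpbd
        gt0 gt1 pt hgt0m hgt1m hptm ε hε0 hε1 hptbd hY2 hg02 hg12 hgt02 hgt12
        (fun _ => (1 : ℝ)) measurable_const (memLp_const 1)
    simp only [mul_one] at h
    have hb12i : Integrable (fun ω =>
        (p (Z ω) / pt (Z ω) - 1) * (g1 (Z ω) - gt1 (Z ω))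
          + (1 - (1 - p (Z ω)) / (1 - pt (Z ω))) * (g0 (Z ω) - gt0 (Z ω))) P :=
      hb1i.add hb2i
    rw [h, integral_add hθi hb12i, integral_add hb1i hb2i]
  -- instantiate the key identity with ψ = θt - M
  have hθψ : Integrable (fun ω => (g1 (Z ω) - g0 (Z ω)) *
      (gt1 (Z ω) - gt0 (Z ω) - M)) P := l2_mul_l2 hθ2 hψ22
  have hb1ψ : Integrable (fun ω => ((p (Z ω) / pt (Z ω) - 1) * (g1 (Z ω) - gt1 (Z ω))) *
      (gt1 (Z ω) - gt0 (Z ω) - M)) P := l2_mul_l2 hb12 hψ22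
  have hb2ψ : Integrable (fun ω =>
      ((1 - (1 - p (Z ω)) / (1 - pt (Z ω))) * (g0 (Z ω) - gt0 (Z ω))) *
        (gt1 (Z ω) - gt0 (Z ω) - M)) P := l2_mul_l2 hb22 hψ22
  have k2 : ∫ ω, (gt1 (Z ω) - gt0 (Z ω) +
      (T ω / pt (Z ω) - (1 - T ω) / (1 - pt (Z ω))) *
        (Y ω - if T ω = 1 then gt1 (Z ω) else gt0 (Z ω))) *
          (gt1 (Z ω) - gt0 (Z ω) - M) ∂P
      = (∫ ω, (g1 (Z ω) - g0 (Z ω)) * (gt1 (Z ω) - gt0 (Z ω) - M) ∂P)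
        + ((∫ ω, ((p (Z ω) / pt (Z ω) - 1) * (g1 (Z ω) - gt1 (Z ω))) *
            (gt1 (Z ω) - gt0 (Z ω) - M) ∂P)
          + (∫ ω, ((1 - (1 - p (Z ω)) / (1 - pt (Z ω))) * (g0 (Z ω) - gt0 (Z ω))) *
            (gt1 (Z ω) - gt0 (Z ω) - M) ∂P)) := by
    have h : ∫ ω, (gt1 (Z ω) - gt0 (Z ω) +
        (T ω / pt (Z ω) - (1 - T ω) / (1 - pt (Z ω))) *
          (Y ω - if T ω = 1 then gt1 (Z ω) else gt0 (Z ω))) *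
            (gt1 (Z ω) - gt0 (Z ω) - M) ∂P
        = ∫ ω, (g1 (Z ω) - g0 (Z ω) +
          ((p (Z ω) / pt (Z ω) - 1) * (g1 (Z ω) - gt1 (Z ω)) +
          (1 - (1 - p (Z ω)) / (1 - pt (Z ω))) * (g0 (Z ω) - gt0 (Z ω)))) *
            (gt1 (Z ω) - gt0 (Z ω) - M) ∂P :=
      blp_key P Y T Z hYm hTm hZm hTbin g0 g1 p hg0m hg1m hpm hU hprop hpbd
        gt0 gt1 pt hgt0m hgt1m hptm ε hε0 hε1 hptbd hY2 hg02 hg12 hgt02 hgt12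
        (fun z => gt1 z - gt0 z - M) ((hgt1m.sub hgt0m).sub measurable_const) hψ22
    rw [h]
    have hpt : ∀ ω, (g1 (Z ω) - g0 (Z ω) +
        ((p (Z ω) / pt (Z ω) - 1) * (g1 (Z ω) - gt1 (Z ω)) +
        (1 - (1 - p (Z ω)) / (1 - pt (Z ω))) * (g0 (Z ω) - gt0 (Z ω)))) *
          (gt1 (Z ω) - gt0 (Z ω) - M)
        = (g1 (Z ω) - g0 (Z ω)) * (gt1 (Z ω) - gt0 (Z ω) - M)
          + (((p (Z ω) / pt (Z ω) - 1) * (g1 (Z ω) - gt1 (Z ω))) *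
              (gt1 (Z ω) - gt0 (Z ω) - M)
            + ((1 - (1 - p (Z ω)) / (1 - pt (Z ω))) * (g0 (Z ω) - gt0 (Z ω))) *
              (gt1 (Z ω) - gt0 (Z ω) - M)) := fun ω => by ring
    have hb12ψ : Integrable (fun ω =>
        ((p (Z ω) / pt (Z ω) - 1) * (g1 (Z ω) - gt1 (Z ω))) * (gt1 (Z ω) - gt0 (Z ω) - M)
          + ((1 - (1 - p (Z ω)) / (1 - pt (Z ω))) * (g0 (Z ω) - gt0 (Z ω))) *
              (gt1 (Z ω) - gt0 (Z ω) - M)) P := hb1ψ.add hb2ψ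
    rw [integral_congr_ae (Filter.Eventually.of_forall hpt),
      integral_add hθψ hb12ψ, integral_add hb1ψ hb2ψ]
  -- covariance reduction: ∫ (f - E f)(θt - M) = ∫ f (θt - M)
  have covred : ∀ f : Ω → ℝ, MemLp f 2 P →
      (∫ ω, (f ω - ∫ m, f m ∂P) * (gt1 (Z ω) - gt0 (Z ω) - M) ∂P)
        = ∫ ω, f ω * (gt1 (Z ω) - gt0 (Z ω) - M) ∂P := by
    intro f hf2
    have h1 : Integrable (fun ω => f ω * (gt1 (Z ω) - gt0 (Z ω) - M)) P :=
      l2_mul_l2 hf2 hψ22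
    have h2 : Integrable (fun ω => (∫ m, f m ∂P) * (gt1 (Z ω) - gt0 (Z ω) - M)) P :=
      hθtMi.const_mul _
    have hpt : ∀ ω, (f ω - ∫ m, f m ∂P) * (gt1 (Z ω) - gt0 (Z ω) - M)
        = f ω * (gt1 (Z ω) - gt0 (Z ω) - M)
          - (∫ m, f m ∂P) * (gt1 (Z ω) - gt0 (Z ω) - M) := fun ω => by ring
    rw [integral_congr_ae (Filter.Eventually.of_forall hpt), integral_sub h1 h2,
      integral_const_mul, hmean0, mul_zero, sub_zero]
  have hcovθ := covred _ hθ2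
  have hcovb1 := covred _ hb12
  have hcovb2 := covred _ hb22
  -- normal equations simplification
  have e1 : ∫ ω, ((gt1 (Z ω) - gt0 (Z ω) +
      (T ω / pt (Z ω) - (1 - T ω) / (1 - pt (Z ω))) *
        (Y ω - if T ω = 1 then gt1 (Z ω) else gt0 (Z ω))) - a
          - b * (gt1 (Z ω) - gt0 (Z ω) - M)) ∂P
      = (∫ ω, (gt1 (Z ω) - gt0 (Z ω) +
        (T ω / pt (Z ω) - (1 - T ω) / (1 - pt (Z ω))) *
          (Y ω - if T ω = 1 then gt1 (Z ω) else gt0 (Z ω))) ∂P) - a := by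
    have hca : Integrable (fun ω => (gt1 (Z ω) - gt0 (Z ω) +
        (T ω / pt (Z ω) - (1 - T ω) / (1 - pt (Z ω))) *
          (Y ω - if T ω = 1 then gt1 (Z ω) else gt0 (Z ω))) - a) P :=
      hci.sub (integrable_const a)
    rw [integral_sub hca (hθtMi.const_mul b),
      integral_sub hci (integrable_const a), integral_const_mul, hmean0, mul_zero, sub_zero,
      integral_const]
    simp
  have hVi : Integrable (fun ω => (gt1 (Z ω) - gt0 (Z ω) - M) *
      (gt1 (Z ω) - gt0 (Z ω) - M)) P := l2_mul_l2 hψ22 hψ22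
  have hcψ : Integrable (fun ω => (gt1 (Z ω) - gt0 (Z ω) +
      (T ω / pt (Z ω) - (1 - T ω) / (1 - pt (Z ω))) *
        (Y ω - if T ω = 1 then gt1 (Z ω) else gt0 (Z ω))) *
          (gt1 (Z ω) - gt0 (Z ω) - M)) P := l2_mul_l2 hc2 hψ22
  have e2 : ∫ ω, ((gt1 (Z ω) - gt0 (Z ω) +
      (T ω / pt (Z ω) - (1 - T ω) / (1 - pt (Z ω))) *
        (Y ω - if T ω = 1 then gt1 (Z ω) else gt0 (Z ω))) - a
          - b * (gt1 (Z ω) - gt0 (Z ω) - M)) * (gt1 (Z ω) - gt0 (Z ω) - M) ∂P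
      = (∫ ω, (gt1 (Z ω) - gt0 (Z ω) +
          (T ω / pt (Z ω) - (1 - T ω) / (1 - pt (Z ω))) *
            (Y ω - if T ω = 1 then gt1 (Z ω) else gt0 (Z ω))) *
              (gt1 (Z ω) - gt0 (Z ω) - M) ∂P)
        - b * ∫ ω, (gt1 (Z ω) - gt0 (Z ω) - M) * (gt1 (Z ω) - gt0 (Z ω) - M) ∂P := by
    have hpt : ∀ ω, ((gt1 (Z ω) - gt0 (Z ω) +
        (T ω / pt (Z ω) - (1 - T ω) / (1 - pt (Z ω))) *
          (Y ω - if T ω = 1 then gt1 (Z ω) else gt0 (Z ω))) - a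
            - b * (gt1 (Z ω) - gt0 (Z ω) - M)) * (gt1 (Z ω) - gt0 (Z ω) - M)
        = (gt1 (Z ω) - gt0 (Z ω) +
            (T ω / pt (Z ω) - (1 - T ω) / (1 - pt (Z ω))) *
              (Y ω - if T ω = 1 then gt1 (Z ω) else gt0 (Z ω))) *
                (gt1 (Z ω) - gt0 (Z ω) - M)
          - a * (gt1 (Z ω) - gt0 (Z ω) - M)
          - b * ((gt1 (Z ω) - gt0 (Z ω) - M) * (gt1 (Z ω) - gt0 (Z ω) - M)) :=
      fun ω => by ring
    have hcsa : Integrable (fun ω => (gt1 (Z ω) - gt0 (Z ω) +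
        (T ω / pt (Z ω) - (1 - T ω) / (1 - pt (Z ω))) *
          (Y ω - if T ω = 1 then gt1 (Z ω) else gt0 (Z ω))) *
            (gt1 (Z ω) - gt0 (Z ω) - M)
          - a * (gt1 (Z ω) - gt0 (Z ω) - M)) P := hcψ.sub (hθtMi.const_mul a)
    rw [integral_congr_ae (Filter.Eventually.of_forall hpt),
      integral_sub hcsa (hVi.const_mul b),
      integral_sub hcψ (hθtMi.const_mul a), integral_const_mul, integral_const_mul,
      hmean0, mul_zero, sub_zero]
  -- wrap up
  rw [e1, e2]
  rw [hcovθ, hcovb1, hcovb2] at *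
  set V : ℝ := ∫ ω, (gt1 (Z ω) - gt0 (Z ω) - M) * (gt1 (Z ω) - gt0 (Z ω) - M) ∂P with hVdef
  have hVne : V ≠ 0 := ne_of_gt hvar
  constructor
  · rintro ⟨h1, h2⟩
    refine ⟨by linarith [k1], ?_⟩
    rw [← add_div, ← add_div, eq_div_iff hVne]
    linarith [k2]
  · rintro ⟨ha, hb⟩
    rw [← add_div, ← add_div, eq_div_iff hVne] at hb
    exact ⟨by linarith [k1], by linarith [k2]⟩
end

section
/- Under the IRM with ML proxies, the conditional expectation of the doubly robust label given the covariates satisfies E[c(η̃) | σ(Z)] = θ(Z) + bias₁ + bias₂ almost surely. -/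
open MeasureTheory ProbabilityTheory

theorem condexp_doubly_robust_label
    {Ω : Type*} [MeasurableSpace Ω] (P : Measure Ω) [IsProbabilityMeasure P]
    {𝓩 : Type*} [MeasurableSpace 𝓩]
    (Y T : Ω → ℝ) (Z : Ω → 𝓩)
    (hYm : Measurable Y) (hTm : Measurable T) (hZm : Measurable Z)
    (hTbin : ∀ ω, T ω = 0 ∨ T ω = 1)
    (g0 g1 p : 𝓩 → ℝ) (hg0m : Measurable g0) (hg1m : Measurable g1) (hpm : Measurable p)
    (hU : MeasureTheory.condExp
        (MeasurableSpace.comap (fun ω => (T ω, Z ω)) inferInstance) P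
        (fun ω => Y ω - (if T ω = 1 then g1 (Z ω) else g0 (Z ω))) =ᵐ[P] 0)
    (hprop : (fun ω => p (Z ω)) =ᵐ[P]
        MeasureTheory.condExp (MeasurableSpace.comap Z inferInstance) P T)
    (hpbd : ∀ᵐ ω ∂P, 0 < p (Z ω) ∧ p (Z ω) < 1)
    (gt0 gt1 pt : 𝓩 → ℝ)
    (hgt0m : Measurable gt0) (hgt1m : Measurable gt1) (hptm : Measurable pt)
    (ε : ℝ) (hε0 : 0 < ε) (hε1 : ε < 1 / 2)
    (hptbd : ∀ᵐ ω ∂P, ε ≤ pt (Z ω) ∧ pt (Z ω) ≤ 1 - ε)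
    (θ : Ω → ℝ) (hθ : θ = fun ω => g1 (Z ω) - g0 (Z ω))
    (Ht : Ω → ℝ) (hHt : Ht = fun ω => T ω / pt (Z ω) - (1 - T ω) / (1 - pt (Z ω)))
    (c : Ω → ℝ)
    (hc : c = fun ω => gt1 (Z ω) - gt0 (Z ω) +
      Ht ω * (Y ω - (if T ω = 1 then gt1 (Z ω) else gt0 (Z ω))))
    (bias1 bias2 : Ω → ℝ)
    (hbias1 : bias1 = fun ω => (p (Z ω) / pt (Z ω) - 1) * (g1 (Z ω) - gt1 (Z ω)))
    (hbias2 : bias2 = fun ω =>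
      (1 - (1 - p (Z ω)) / (1 - pt (Z ω))) * (g0 (Z ω) - gt0 (Z ω)))
    (hYint : Integrable Y P)
    (hg0int : Integrable (fun ω => g0 (Z ω)) P) (hg1int : Integrable (fun ω => g1 (Z ω)) P)
    (hgt0int : Integrable (fun ω => gt0 (Z ω)) P)
    (hgt1int : Integrable (fun ω => gt1 (Z ω)) P)
    :
    MeasureTheory.condExp (MeasurableSpace.comap Z inferInstance) P c =ᵐ[P]
      (fun ω => θ ω + bias1 ω + bias2 ω) := by
  classical
  subst hθ hHt hc hbias1 hbias2
  have hm : MeasurableSpace.comap Z inferInstance ≤ ‹MeasurableSpace Ω› := hZm.comap_le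
  have hm2 : MeasurableSpace.comap (fun ω => (T ω, Z ω)) inferInstance ≤
      ‹MeasurableSpace Ω› := (hTm.prodMk hZm).comap_le
  have hmm2 : MeasurableSpace.comap Z inferInstance ≤
      MeasurableSpace.comap (fun ω => (T ω, Z ω)) inferInstance := by
    have hZ : Z = Prod.snd ∘ (fun ω => (T ω, Z ω)) := rfl
    rw [hZ, ← MeasurableSpace.comap_comp]
    exact MeasurableSpace.comap_mono measurable_snd.comap_le
  -- measurability of Z wrt m, of (T,Z) wrt m2
  have hZm' : Measurable[MeasurableSpace.comap Z inferInstance] Z := fun s hs => ⟨s, hs, rfl⟩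
  have hTZm' : Measurable[MeasurableSpace.comap (fun ω => (T ω, Z ω)) inferInstance] (fun ω => (T ω, Z ω)) := fun s hs => ⟨s, hs, rfl⟩
  -- abbreviations
  set Gf : Ω → ℝ := fun ω => if T ω = 1 then g1 (Z ω) else g0 (Z ω) with hGf_def
  set U : Ω → ℝ := fun ω => Y ω - Gf ω with hU_def
  set W : Ω → ℝ :=
    fun ω => gt1 (Z ω) - gt0 (Z ω) - (g0 (Z ω) - gt0 (Z ω)) / (1 - pt (Z ω)) with hW_def
  set K : Ω → ℝ :=
    fun ω => (g1 (Z ω) - gt1 (Z ω)) / pt (Z ω) + (g0 (Z ω) - gt0 (Z ω)) / (1 - pt (Z ω))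
    with hK_def
  set Ht : Ω → ℝ := fun ω => T ω / pt (Z ω) - (1 - T ω) / (1 - pt (Z ω)) with hHt_def
  -- bounds on pt
  have hpt : ∀ᵐ ω ∂P, ε ≤ pt (Z ω) ∧ ε ≤ 1 - pt (Z ω) :=
    hptbd.mono fun ω h => ⟨h.1, by linarith [h.2]⟩
  -- measurability facts
  have hGfm : Measurable Gf :=
    Measurable.ite (hTm (measurableSet_singleton 1)) (hg1m.comp hZm) (hg0m.comp hZm)
  have hUm : Measurable U := hYm.sub hGfm
  have hHtm : Measurable Ht :=
    (hTm.div (hptm.comp hZm)).sub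
      ((measurable_const.sub hTm).div (measurable_const.sub (hptm.comp hZm)))
  have hWm' : StronglyMeasurable[MeasurableSpace.comap Z inferInstance] W :=
    (((hgt1m.comp hZm').sub (hgt0m.comp hZm')).sub
      (((hg0m.comp hZm').sub (hgt0m.comp hZm')).div
        (measurable_const.sub (hptm.comp hZm')))).stronglyMeasurable
  have hKm' : StronglyMeasurable[MeasurableSpace.comap Z inferInstance] K :=
    ((((hg1m.comp hZm').sub (hgt1m.comp hZm')).div (hptm.comp hZm')).add
      (((hg0m.comp hZm').sub (hgt0m.comp hZm')).div
        (measurable_const.sub (hptm.comp hZm')))).stronglyMeasurable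
  have hHtm2 : StronglyMeasurable[MeasurableSpace.comap (fun ω => (T ω, Z ω)) inferInstance] Ht := by
    have hφ : Measurable (fun q : ℝ × 𝓩 => q.1 / pt q.2 - (1 - q.1) / (1 - pt q.2)) :=
      (measurable_fst.div (hptm.comp measurable_snd)).sub
        ((measurable_const.sub measurable_fst).div
          (measurable_const.sub (hptm.comp measurable_snd)))
    exact (hφ.comp hTZm').stronglyMeasurable
  -- integrability helper
  have intb : ∀ (f b : Ω → ℝ), Measurable f → Integrable b P →
      (∀ᵐ ω ∂P, |f ω| ≤ b ω) → Integrable f P := fun f b hf hb h =>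
    hb.mono' hf.aestronglyMeasurable (h.mono fun ω h => by simpa [Real.norm_eq_abs] using h)
  have hGfint : Integrable Gf P := by
    refine intb _ (fun ω => |g0 (Z ω)| + |g1 (Z ω)|) hGfm (hg0int.abs.add hg1int.abs)
      (Filter.Eventually.of_forall fun ω => ?_)
    by_cases h : T ω = 1
    · simpa [hGf_def, h] using le_add_of_nonneg_left (abs_nonneg _)
    · simpa [hGf_def, h] using le_add_of_nonneg_right (abs_nonneg _)
  have hUint : Integrable U P := hYint.sub hGfint
  have hTint : Integrable T P := by
    refine intb _ (fun _ => 1) hTm (integrable_const 1)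
      (Filter.Eventually.of_forall fun ω => ?_)
    rcases hTbin ω with h | h <;> simp [h]
  have hdivle : ∀ x y : ℝ, ε ≤ y → |x / y| ≤ |x| / ε := by
    intro x y hy
    rw [abs_div]
    refine div_le_div_of_nonneg_left (abs_nonneg x) hε0 ?_ |>.trans ?_
    · exact le_trans hy (le_abs_self y)
    · exact le_refl _
  have hHtbd : ∀ᵐ ω ∂P, |Ht ω| ≤ 1 / ε := by
    filter_upwards [hpt] with ω h
    rcases hTbin ω with ht | ht
    · have hh : Ht ω = -(1 / (1 - pt (Z ω))) := by simp [hHt_def, ht]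
      rw [hh, abs_neg]
      exact (hdivle 1 _ h.2).trans (by simp)
    · have hh : Ht ω = 1 / pt (Z ω) := by simp [hHt_def, ht]
      rw [hh]
      exact (hdivle 1 _ h.1).trans (by simp)
  have hHtUint : Integrable (fun ω => Ht ω * U ω) P := by
    refine intb _ (fun ω => |U ω| * (1 / ε)) (hHtm.mul hUm)
      (hUint.abs.mul_const _) ?_
    filter_upwards [hHtbd] with ω h
    rw [abs_mul, mul_comm]
    exact mul_le_mul_of_nonneg_left h (abs_nonneg _)
  have hWint : Integrable W P := by
    refine intb _ (fun ω => |gt1 (Z ω)| + |gt0 (Z ω)| + |g0 (Z ω) - gt0 (Z ω)| / ε)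
      (hWm'.measurable.mono hm le_rfl)
      ((hgt1int.abs.add hgt0int.abs).add ((hg0int.sub hgt0int).abs.div_const ε)) ?_
    filter_upwards [hpt] with ω h
    calc |W ω| ≤ |gt1 (Z ω) - gt0 (Z ω)| + |(g0 (Z ω) - gt0 (Z ω)) / (1 - pt (Z ω))| :=
          abs_sub _ _
      _ ≤ (|gt1 (Z ω)| + |gt0 (Z ω)|) + |g0 (Z ω) - gt0 (Z ω)| / ε :=
          add_le_add (abs_sub _ _) (hdivle _ _ h.2)
  have hKint : Integrable K P := by
    refine intb _ (fun ω => |g1 (Z ω) - gt1 (Z ω)| / ε + |g0 (Z ω) - gt0 (Z ω)| / ε)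
      (hKm'.measurable.mono hm le_rfl)
      (((hg1int.sub hgt1int).abs.div_const ε).add ((hg0int.sub hgt0int).abs.div_const ε)) ?_
    filter_upwards [hpt] with ω h
    calc |K ω| ≤ |(g1 (Z ω) - gt1 (Z ω)) / pt (Z ω)| +
          |(g0 (Z ω) - gt0 (Z ω)) / (1 - pt (Z ω))| := abs_add_le _ _
      _ ≤ _ := add_le_add (hdivle _ _ h.1) (hdivle _ _ h.2)
  have hKTint : Integrable (fun ω => K ω * T ω) P := by
    refine intb _ (fun ω => |K ω|) ((hKm'.measurable.mono hm le_rfl).mul hTm)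
      hKint.abs (Filter.Eventually.of_forall fun ω => ?_)
    rw [abs_mul]
    rcases hTbin ω with h | h <;> simp [h]
  -- pointwise decomposition of c
  have hceq : (fun ω => gt1 (Z ω) - gt0 (Z ω) +
      Ht ω * (Y ω - (if T ω = 1 then gt1 (Z ω) else gt0 (Z ω)))) =
      (fun ω => W ω + K ω * T ω) + fun ω => Ht ω * U ω := by
    funext ω
    simp only [Pi.add_apply, hU_def, hGf_def, hW_def, hK_def, hHt_def]
    rcases hTbin ω with h | h <;> simp only [h] <;> norm_num <;> ring
  rw [hceq]
  have step1 : P[(fun ω => W ω + K ω * T ω) + (fun ω => Ht ω * U ω)|MeasurableSpace.comap Z inferInstance] =ᵐ[P]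
      P[fun ω => W ω + K ω * T ω|MeasurableSpace.comap Z inferInstance] + P[fun ω => Ht ω * U ω|MeasurableSpace.comap Z inferInstance] :=
    condExp_add (hWint.add hKTint) hHtUint _
  -- the noise term vanishes
  have step2 : P[fun ω => Ht ω * U ω|MeasurableSpace.comap Z inferInstance] =ᵐ[P] 0 := by
    have h2a : P[fun ω => Ht ω * U ω|MeasurableSpace.comap (fun ω => (T ω, Z ω)) inferInstance] =ᵐ[P] 0 := by
      have hmul := condExp_mul_of_stronglyMeasurable_left (μ := P) hHtm2
        (show Integrable (Ht * U) P from hHtUint) hUint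
      refine (hmul.trans ?_)
      have : Ht * P[U|MeasurableSpace.comap (fun ω => (T ω, Z ω)) inferInstance] =ᵐ[P] Ht * 0 := hU.mono fun ω h => by
        simp only [Pi.mul_apply, h, Pi.zero_apply]
      simpa using this
    calc P[fun ω => Ht ω * U ω|MeasurableSpace.comap Z inferInstance]
        =ᵐ[P] P[P[fun ω => Ht ω * U ω|MeasurableSpace.comap (fun ω => (T ω, Z ω)) inferInstance]|MeasurableSpace.comap Z inferInstance] := (condExp_condExp_of_le hmm2 hm2).symm
      _ =ᵐ[P] P[(0 : Ω → ℝ)|MeasurableSpace.comap Z inferInstance] := condExp_congr_ae h2a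
      _ = 0 := condExp_zero
  -- the main term
  have step3 : P[fun ω => W ω + K ω * T ω|MeasurableSpace.comap Z inferInstance] =ᵐ[P] fun ω => W ω + K ω * p (Z ω) := by
    have h3a : P[fun ω => W ω + K ω * T ω|MeasurableSpace.comap Z inferInstance] =ᵐ[P]
        P[W|MeasurableSpace.comap Z inferInstance] + P[fun ω => K ω * T ω|MeasurableSpace.comap Z inferInstance] := condExp_add hWint hKTint _
    have h3b : P[W|MeasurableSpace.comap Z inferInstance] = W := condExp_of_stronglyMeasurable hm hWm' hWint
    have h3c : P[fun ω => K ω * T ω|MeasurableSpace.comap Z inferInstance] =ᵐ[P] fun ω => K ω * p (Z ω) := by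
      have hmul := condExp_mul_of_stronglyMeasurable_left (μ := P) hKm'
        (show Integrable (K * T) P from hKTint) hTint
      refine hmul.trans ?_
      exact hprop.symm.mono fun ω h => by simp only [Pi.mul_apply, ← h]
    refine h3a.trans ?_
    rw [h3b]
    exact h3c.mono fun ω h => by simp only [Pi.add_apply, h]
  refine (step1.trans (step3.add step2)).trans ?_
  refine Filter.Eventually.of_forall fun ω => ?_
  simp only [Pi.add_apply, Pi.zero_apply, hW_def, hK_def, add_zero]
  ring
end

section
/- Under the IRM with ML proxies, the expectation of the doubly robust label satisfies E[c(η̃)] = E[θ(Z)] + E[bias₁] + E[bias₂]. -/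
open MeasureTheory ProbabilityTheory

lemma aux_tower_mul {Ω : Type*} [mΩ : MeasurableSpace Ω] (P : Measure Ω)
    [IsProbabilityMeasure P] {m : MeasurableSpace Ω} (hm : m ≤ mΩ) {f g h : Ω → ℝ}
    (hf : StronglyMeasurable[m] f) (hfg : Integrable (fun ω => f ω * g ω) P)
    (hg : Integrable g P) (hcond : P[g|m] =ᵐ[P] h) :
    ∫ ω, f ω * g ω ∂P = ∫ ω, f ω * h ω ∂P := by
  have h1 : ∫ ω, f ω * g ω ∂P = ∫ ω, (P[fun ω => f ω * g ω|m]) ω ∂P :=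
    (integral_condExp hm).symm
  rw [h1]
  refine integral_congr_ae ?_
  have := condExp_mul_of_stronglyMeasurable_left (μ := P) hf hfg hg
  filter_upwards [this, hcond] with ω h2 h3
  simp only [Pi.mul_apply] at h2
  rw [show (fun ω => f ω * g ω) = f * g from rfl, h2, h3]

theorem aux_drl
    {Ω : Type*} [mΩ : MeasurableSpace Ω] (P : Measure Ω) [IsProbabilityMeasure P]
    {𝓩 : Type*} [m𝓩 : MeasurableSpace 𝓩]
    (Y T : Ω → ℝ) (Z : Ω → 𝓩)
    (hYm : Measurable Y) (hTm : Measurable T) (hZm : Measurable Z)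
    (hTbin : ∀ ω, T ω = 0 ∨ T ω = 1)
    (g0 g1 p : 𝓩 → ℝ) (hg0m : Measurable g0) (hg1m : Measurable g1) (hpm : Measurable p)
    (hU : MeasureTheory.condExp
        (MeasurableSpace.comap (fun ω => (T ω, Z ω)) inferInstance) P
        (fun ω => Y ω - (if T ω = 1 then g1 (Z ω) else g0 (Z ω))) =ᵐ[P] 0)
    (hprop : (fun ω => p (Z ω)) =ᵐ[P]
        MeasureTheory.condExp (MeasurableSpace.comap Z inferInstance) P T)
    (hpbd : ∀ᵐ ω ∂P, 0 < p (Z ω) ∧ p (Z ω) < 1)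
    (gt0 gt1 pt : 𝓩 → ℝ)
    (hgt0m : Measurable gt0) (hgt1m : Measurable gt1) (hptm : Measurable pt)
    (ε : ℝ) (hε0 : 0 < ε) (hε1 : ε < 1 / 2)
    (hptbd : ∀ᵐ ω ∂P, ε ≤ pt (Z ω) ∧ pt (Z ω) ≤ 1 - ε)
    (θ : Ω → ℝ) (hθ : θ = fun ω => g1 (Z ω) - g0 (Z ω))
    (Ht : Ω → ℝ) (hHt : Ht = fun ω => T ω / pt (Z ω) - (1 - T ω) / (1 - pt (Z ω)))
    (c : Ω → ℝ)
    (hc : c = fun ω => gt1 (Z ω) - gt0 (Z ω) +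
      Ht ω * (Y ω - (if T ω = 1 then gt1 (Z ω) else gt0 (Z ω))))
    (bias1 bias2 : Ω → ℝ)
    (hbias1 : bias1 = fun ω => (p (Z ω) / pt (Z ω) - 1) * (g1 (Z ω) - gt1 (Z ω)))
    (hbias2 : bias2 = fun ω =>
      (1 - (1 - p (Z ω)) / (1 - pt (Z ω))) * (g0 (Z ω) - gt0 (Z ω)))
    (hYint : Integrable Y P)
    (hg0int : Integrable (fun ω => g0 (Z ω)) P) (hg1int : Integrable (fun ω => g1 (Z ω)) P)
    (hgt0int : Integrable (fun ω => gt0 (Z ω)) P)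
    (hgt1int : Integrable (fun ω => gt1 (Z ω)) P)
    :
    ∫ ω, c ω ∂P = (∫ ω, θ ω ∂P) + (∫ ω, bias1 ω ∂P) + (∫ ω, bias2 ω ∂P) := by
  have hm2 : MeasurableSpace.comap (fun ω => (T ω, Z ω)) inferInstance ≤ mΩ :=
    (hTm.prodMk hZm).comap_le
  have hmZ : MeasurableSpace.comap Z inferInstance ≤ mΩ := hZm.comap_le
  have hTZcm : Measurable[MeasurableSpace.comap (fun ω => (T ω, Z ω)) inferInstance]
      (fun ω => (T ω, Z ω)) := Measurable.of_comap_le le_rfl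
  have hZcm : Measurable[MeasurableSpace.comap Z inferInstance] Z :=
    Measurable.of_comap_le le_rfl
  -- basic bounds
  have hTnorm : ∀ ω, ‖T ω‖ ≤ 1 := by
    intro ω; rcases hTbin ω with h | h <;> simp [h]
  have hT1norm : ∀ ω, ‖1 - T ω‖ ≤ 1 := by
    intro ω; rcases hTbin ω with h | h <;> simp [h]
  have hTint : Integrable T P :=
    Integrable.mono' (integrable_const 1) hTm.aestronglyMeasurable (ae_of_all _ hTnorm)
  -- Ht bound
  have hHtbd : ∀ᵐ ω ∂P, ‖Ht ω‖ ≤ ε⁻¹ := by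
    filter_upwards [hptbd] with ω hpt
    obtain ⟨h1, h2⟩ := hpt
    have hptpos : 0 < pt (Z ω) := lt_of_lt_of_le hε0 h1
    have h1pt : ε ≤ 1 - pt (Z ω) := by linarith
    have h1ptpos : 0 < 1 - pt (Z ω) := lt_of_lt_of_le hε0 h1pt
    rcases hTbin ω with h | h
    · have he : (fun ω => T ω / pt (Z ω) - (1 - T ω) / (1 - pt (Z ω))) ω =
          -(1 - pt (Z ω))⁻¹ := by simp [h, one_div]
      rw [hHt, he, norm_neg, Real.norm_eq_abs, abs_of_nonneg (inv_nonneg.mpr h1ptpos.le)]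
      exact inv_anti₀ hε0 h1pt
    · have he : (fun ω => T ω / pt (Z ω) - (1 - T ω) / (1 - pt (Z ω))) ω =
          (pt (Z ω))⁻¹ := by simp [h, one_div]
      rw [hHt, he, Real.norm_eq_abs, abs_of_nonneg (inv_nonneg.mpr hptpos.le)]
      exact inv_anti₀ hε0 h1
  -- Ht is m2-measurable
  have hHtm2 : StronglyMeasurable[MeasurableSpace.comap (fun ω => (T ω, Z ω)) inferInstance]
      Ht := by
    rw [hHt]
    have : Measurable (fun q : ℝ × 𝓩 => q.1 / pt q.2 - (1 - q.1) / (1 - pt q.2)) :=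
      (measurable_fst.div ((hptm.comp measurable_snd))).sub
        ((measurable_const.sub measurable_fst).div
          (measurable_const.sub ((hptm.comp measurable_snd))))
    exact (this.comp hTZcm).stronglyMeasurable
  -- residual U
  set Uf : Ω → ℝ := fun ω => Y ω - (if T ω = 1 then g1 (Z ω) else g0 (Z ω)) with hUfdef
  have hifint : Integrable (fun ω => if T ω = 1 then g1 (Z ω) else g0 (Z ω)) P := by
    refine Integrable.mono' (hg1int.norm.add hg0int.norm) ?_ (ae_of_all _ fun ω => ?_)
    · exact (Measurable.ite (hTm (measurableSet_singleton 1)) (hg1m.comp hZm)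
        (hg0m.comp hZm)).aestronglyMeasurable
    · rcases eq_or_ne (T ω) 1 with h | h
      · rw [if_pos h]; exact le_add_of_nonneg_right (norm_nonneg _)
      · rw [if_neg h]; exact le_add_of_nonneg_left (norm_nonneg _)
  have hUint : Integrable Uf P := hYint.sub hifint
  have hHtUint : Integrable (fun ω => Ht ω * Uf ω) P :=
    hUint.bdd_mul ((hHtm2.mono hm2).aestronglyMeasurable) hHtbd
  -- E[Ht * U] = 0
  have hB : ∫ ω, Ht ω * Uf ω ∂P = 0 := by
    rw [aux_tower_mul P hm2 hHtm2 hHtUint hUint hU]; simp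
  -- correction terms
  set h1f : 𝓩 → ℝ := fun z => (g1 z - gt1 z) / pt z with hh1fdef
  set h0f : 𝓩 → ℝ := fun z => (g0 z - gt0 z) / (1 - pt z) with hh0fdef
  have hinv1bd : ∀ᵐ ω ∂P, ‖(pt (Z ω))⁻¹‖ ≤ ε⁻¹ := by
    filter_upwards [hptbd] with ω h
    obtain ⟨h1, h2⟩ := h
    have hpos : 0 < pt (Z ω) := lt_of_lt_of_le hε0 h1
    rw [Real.norm_eq_abs, abs_of_nonneg (inv_nonneg.mpr hpos.le)]
    exact inv_anti₀ hε0 h1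
  have hinv0bd : ∀ᵐ ω ∂P, ‖(1 - pt (Z ω))⁻¹‖ ≤ ε⁻¹ := by
    filter_upwards [hptbd] with ω h
    obtain ⟨h1, h2⟩ := h
    have h1pt : ε ≤ 1 - pt (Z ω) := by linarith
    rw [Real.norm_eq_abs, abs_of_nonneg (inv_nonneg.mpr (lt_of_lt_of_le hε0 h1pt).le)]
    exact inv_anti₀ hε0 h1pt
  have hh1int : Integrable (fun ω => h1f (Z ω)) P := by
    have h := (hg1int.sub hgt1int).bdd_mul
      ((hptm.comp hZm).inv.aestronglyMeasurable) hinv1bd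
    refine h.congr (ae_of_all _ fun ω => ?_)
    rw [hh1fdef]; simp [div_eq_inv_mul]
  have hh0int : Integrable (fun ω => h0f (Z ω)) P := by
    have h := (hg0int.sub hgt0int).bdd_mul
      ((measurable_const.sub (hptm.comp hZm)).inv.aestronglyMeasurable) hinv0bd
    refine h.congr (ae_of_all _ fun ω => ?_)
    rw [hh0fdef]; simp [div_eq_inv_mul]
  have hh1sm : StronglyMeasurable[MeasurableSpace.comap Z inferInstance]
      (fun ω => h1f (Z ω)) :=
    (((hg1m.sub hgt1m).div hptm).comp hZcm).stronglyMeasurable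
  have hh0sm : StronglyMeasurable[MeasurableSpace.comap Z inferInstance]
      (fun ω => h0f (Z ω)) :=
    (((hg0m.sub hgt0m).div (measurable_const.sub hptm)).comp hZcm).stronglyMeasurable
  have hh1Tint : Integrable (fun ω => h1f (Z ω) * T ω) P :=
    (hh1int.bdd_mul hTm.aestronglyMeasurable (ae_of_all _ hTnorm)).congr
      (ae_of_all _ fun ω => mul_comm _ _)
  have hh0Tint : Integrable (fun ω => h0f (Z ω) * (1 - T ω)) P :=
    (hh0int.bdd_mul (measurable_const.sub hTm).aestronglyMeasurable
      (ae_of_all _ hT1norm)).congr (ae_of_all _ fun ω => mul_comm _ _)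
  -- conditional expectations over mZ
  have hcondT : P[T|MeasurableSpace.comap Z inferInstance] =ᵐ[P] fun ω => p (Z ω) :=
    hprop.symm
  have hcond1T : P[fun ω => 1 - T ω|MeasurableSpace.comap Z inferInstance] =ᵐ[P]
      fun ω => 1 - p (Z ω) := by
    have hsub := condExp_sub (m := MeasurableSpace.comap Z inferInstance) (μ := P)
      (integrable_const (1 : ℝ)) hTint
    have hconst : P[fun _ : Ω => (1 : ℝ)|MeasurableSpace.comap Z inferInstance] =
      fun _ => (1 : ℝ) := condExp_const hmZ 1
    filter_upwards [hsub, hcondT] with ω h1 h2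
    have he : (fun ω => 1 - T ω) = (fun _ : Ω => (1:ℝ)) - T := rfl
    rw [he, h1]
    simp [hconst, h2]
  have hI1 : ∫ ω, h1f (Z ω) * T ω ∂P = ∫ ω, h1f (Z ω) * p (Z ω) ∂P :=
    aux_tower_mul P hmZ hh1sm hh1Tint hTint hcondT
  have hI0 : ∫ ω, h0f (Z ω) * (1 - T ω) ∂P = ∫ ω, h0f (Z ω) * (1 - p (Z ω)) ∂P :=
    aux_tower_mul P hmZ hh0sm hh0Tint ((integrable_const 1).sub hTint) hcond1T
  -- pointwise decomposition of c
  have hceq : ∀ ω, c ω = (gt1 (Z ω) - gt0 (Z ω)) + Ht ω * Uf ω +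
      (h1f (Z ω) * T ω - h0f (Z ω) * (1 - T ω)) := by
    intro ω
    rw [hc, hUfdef]
    simp only
    have hD : Ht ω * ((if T ω = 1 then g1 (Z ω) else g0 (Z ω)) -
        (if T ω = 1 then gt1 (Z ω) else gt0 (Z ω))) =
        h1f (Z ω) * T ω - h0f (Z ω) * (1 - T ω) := by
      rcases hTbin ω with h | h
      · rw [hHt, hh1fdef, hh0fdef]
        simp only [h, zero_div, zero_sub, sub_zero, mul_zero, zero_mul,
          if_neg (by norm_num : ¬ ((0:ℝ) = 1))]
        ring
      · rw [hHt, hh1fdef, hh0fdef]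
        rw [if_pos h, if_pos h]
        simp only [h, sub_self, zero_div]
        ring
    have he : Y ω - (if T ω = 1 then gt1 (Z ω) else gt0 (Z ω)) =
        (Y ω - (if T ω = 1 then g1 (Z ω) else g0 (Z ω))) +
        ((if T ω = 1 then g1 (Z ω) else g0 (Z ω)) -
          (if T ω = 1 then gt1 (Z ω) else gt0 (Z ω))) := by ring
    rw [he, mul_add, hD]
    ring
  -- pointwise decomposition of θ + bias1 + bias2
  have hreq : ∀ ω, θ ω + bias1 ω + bias2 ω = (gt1 (Z ω) - gt0 (Z ω)) +
      (h1f (Z ω) * p (Z ω) - h0f (Z ω) * (1 - p (Z ω))) := by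
    intro ω
    rw [hθ, hbias1, hbias2, hh1fdef, hh0fdef]
    simp only
    rw [div_eq_mul_inv, div_eq_mul_inv, div_eq_mul_inv, div_eq_mul_inv]
    ring
  -- integrability of bias terms
  have hbias1int : Integrable bias1 P := by
    rw [hbias1]
    have h1 : Integrable (fun ω => p (Z ω) * h1f (Z ω)) P := by
      refine hh1int.bdd_mul (c := 1) (hpm.comp hZm).aestronglyMeasurable ?_
      filter_upwards [hpbd] with ω h
      simp only [Real.norm_eq_abs, Function.comp_apply, Pi.sub_apply]
      rw [abs_of_pos h.1]; linarith [h.2]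
    refine (h1.sub (hg1int.sub hgt1int)).congr (ae_of_all _ fun ω => ?_)
    simp only [hh1fdef, Pi.sub_apply, div_eq_mul_inv]
    ring
  have hbias2int : Integrable bias2 P := by
    rw [hbias2]
    have h0 : Integrable (fun ω => (1 - p (Z ω)) * h0f (Z ω)) P := by
      refine hh0int.bdd_mul (c := 1) (measurable_const.sub (hpm.comp hZm)).aestronglyMeasurable ?_
      filter_upwards [hpbd] with ω h
      simp only [Real.norm_eq_abs, Function.comp_apply, Pi.sub_apply]
      rw [abs_of_pos (show (0:ℝ) < 1 - p (Z ω) by linarith [h.2])]; linarith [h.1]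
    refine ((hg0int.sub hgt0int).sub h0).congr (ae_of_all _ fun ω => ?_)
    simp only [hh0fdef, Pi.sub_apply, div_eq_mul_inv]
    ring
  have hθint : Integrable θ P := by rw [hθ]; exact hg1int.sub hg0int
  -- assemble
  have hgtd : Integrable (fun ω => gt1 (Z ω) - gt0 (Z ω)) P :=
    (hgt1int.sub hgt0int).congr (ae_of_all _ fun _ => rfl)
  have h12 : Integrable (fun ω => gt1 (Z ω) - gt0 (Z ω) + Ht ω * Uf ω) P :=
    (hgtd.add hHtUint).congr (ae_of_all _ fun _ => rfl)
  have h34 : Integrable (fun ω => h1f (Z ω) * T ω - h0f (Z ω) * (1 - T ω)) P :=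
    (hh1Tint.sub hh0Tint).congr (ae_of_all _ fun _ => rfl)
  have hLHS : ∫ ω, c ω ∂P = (∫ ω, (gt1 (Z ω) - gt0 (Z ω)) ∂P) +
      (∫ ω, Ht ω * Uf ω ∂P) +
      ((∫ ω, h1f (Z ω) * T ω ∂P) - (∫ ω, h0f (Z ω) * (1 - T ω) ∂P)) := by
    calc ∫ ω, c ω ∂P = ∫ ω, (gt1 (Z ω) - gt0 (Z ω)) + Ht ω * Uf ω +
        (h1f (Z ω) * T ω - h0f (Z ω) * (1 - T ω)) ∂P :=
          integral_congr_ae (ae_of_all _ fun ω => hceq ω)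
      _ = _ := by
          rw [integral_add h12 h34, integral_add hgtd hHtUint,
            integral_sub hh1Tint hh0Tint]
  have hp1int : Integrable (fun ω => h1f (Z ω) * p (Z ω)) P := by
    refine (hh1int.bdd_mul (c := 1) (hpm.comp hZm).aestronglyMeasurable ?_).congr
      (ae_of_all _ fun ω => mul_comm _ _)
    filter_upwards [hpbd] with ω h
    simp only [Real.norm_eq_abs, Function.comp_apply, Pi.sub_apply]
    rw [abs_of_pos h.1]; linarith [h.2]
  have hp0int : Integrable (fun ω => h0f (Z ω) * (1 - p (Z ω))) P := by
    refine (hh0int.bdd_mul (c := 1) (measurable_const.sub (hpm.comp hZm)).aestronglyMeasurable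
      ?_).congr (ae_of_all _ fun ω => mul_comm _ _)
    filter_upwards [hpbd] with ω h
    simp only [Real.norm_eq_abs, Function.comp_apply, Pi.sub_apply]
    rw [abs_of_pos (show (0:ℝ) < 1 - p (Z ω) by linarith [h.2])]; linarith [h.1]
  have hθb1 : Integrable (fun ω => θ ω + bias1 ω) P :=
    (hθint.add hbias1int).congr (ae_of_all _ fun _ => rfl)
  have hps : Integrable (fun ω => h1f (Z ω) * p (Z ω) - h0f (Z ω) * (1 - p (Z ω))) P :=
    (hp1int.sub hp0int).congr (ae_of_all _ fun _ => rfl)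
  have hRHS : (∫ ω, θ ω ∂P) + (∫ ω, bias1 ω ∂P) + (∫ ω, bias2 ω ∂P) =
      (∫ ω, (gt1 (Z ω) - gt0 (Z ω)) ∂P) +
      ((∫ ω, h1f (Z ω) * p (Z ω) ∂P) - (∫ ω, h0f (Z ω) * (1 - p (Z ω)) ∂P)) := by
    calc (∫ ω, θ ω ∂P) + (∫ ω, bias1 ω ∂P) + (∫ ω, bias2 ω ∂P)
        = ∫ ω, θ ω + bias1 ω + bias2 ω ∂P := by
          rw [← integral_add hθint hbias1int, ← integral_add hθb1 hbias2int]
      _ = ∫ ω, (gt1 (Z ω) - gt0 (Z ω)) +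
            (h1f (Z ω) * p (Z ω) - h0f (Z ω) * (1 - p (Z ω))) ∂P :=
          integral_congr_ae (ae_of_all _ fun ω => hreq ω)
      _ = _ := by rw [integral_add hgtd hps, integral_sub hp1int hp0int]
  rw [hLHS, hRHS, hB, hI1, hI0]
  ring


theorem expectation_doubly_robust_label
    {Ω : Type*} [MeasurableSpace Ω] (P : Measure Ω) [IsProbabilityMeasure P]
    {𝓩 : Type*} [MeasurableSpace 𝓩]
    (Y T : Ω → ℝ) (Z : Ω → 𝓩)
    (hYm : Measurable Y) (hTm : Measurable T) (hZm : Measurable Z)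
    (hTbin : ∀ ω, T ω = 0 ∨ T ω = 1)
    (g0 g1 p : 𝓩 → ℝ) (hg0m : Measurable g0) (hg1m : Measurable g1) (hpm : Measurable p)
    (hU : MeasureTheory.condExp
        (MeasurableSpace.comap (fun ω => (T ω, Z ω)) inferInstance) P
        (fun ω => Y ω - (if T ω = 1 then g1 (Z ω) else g0 (Z ω))) =ᵐ[P] 0)
    (hprop : (fun ω => p (Z ω)) =ᵐ[P]
        MeasureTheory.condExp (MeasurableSpace.comap Z inferInstance) P T)
    (hpbd : ∀ᵐ ω ∂P, 0 < p (Z ω) ∧ p (Z ω) < 1)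
    (gt0 gt1 pt : 𝓩 → ℝ)
    (hgt0m : Measurable gt0) (hgt1m : Measurable gt1) (hptm : Measurable pt)
    (ε : ℝ) (hε0 : 0 < ε) (hε1 : ε < 1 / 2)
    (hptbd : ∀ᵐ ω ∂P, ε ≤ pt (Z ω) ∧ pt (Z ω) ≤ 1 - ε)
    (θ : Ω → ℝ) (hθ : θ = fun ω => g1 (Z ω) - g0 (Z ω))
    (Ht : Ω → ℝ) (hHt : Ht = fun ω => T ω / pt (Z ω) - (1 - T ω) / (1 - pt (Z ω)))
    (c : Ω → ℝ)
    (hc : c = fun ω => gt1 (Z ω) - gt0 (Z ω) +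
      Ht ω * (Y ω - (if T ω = 1 then gt1 (Z ω) else gt0 (Z ω))))
    (bias1 bias2 : Ω → ℝ)
    (hbias1 : bias1 = fun ω => (p (Z ω) / pt (Z ω) - 1) * (g1 (Z ω) - gt1 (Z ω)))
    (hbias2 : bias2 = fun ω =>
      (1 - (1 - p (Z ω)) / (1 - pt (Z ω))) * (g0 (Z ω) - gt0 (Z ω)))
    (hYint : Integrable Y P)
    (hg0int : Integrable (fun ω => g0 (Z ω)) P) (hg1int : Integrable (fun ω => g1 (Z ω)) P)
    (hgt0int : Integrable (fun ω => gt0 (Z ω)) P)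
    (hgt1int : Integrable (fun ω => gt1 (Z ω)) P)
    :
    ∫ ω, c ω ∂P = (∫ ω, θ ω ∂P) + (∫ ω, bias1 ω ∂P) + (∫ ω, bias2 ω ∂P) := by
  exact aux_drl P Y T Z hYm hTm hZm hTbin g0 g1 p hg0m hg1m hpm hU hprop hpbd
    gt0 gt1 pt hgt0m hgt1m hptm ε hε0 hε1 hptbd θ hθ Ht hHt c hc bias1 bias2
    hbias1 hbias2 hYint hg0int hg1int hgt0int hgt1int
end

section
/- (Double robustness in the propensity score.) Under the IRM with ML proxies, if additionally μ̃(Z) = μ(Z) almost surely, then bias₁ = 0 and bias₂ = 0 almost surely, and consequently the linear-projection coefficients of c(η̃) on (1, θ̃(Z) − E[θ̃(Z)]) equal (a₁, b₁) = (E[θ(Z)], Cov(θ(Z), θ̃(Z))/Var(θ̃(Z))), i.e., the coefficients of the best linear predictor of θ(Z) by θ̃(Z). -/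
open MeasureTheory ProbabilityTheory

private lemma measurable_comap_aux {Ω β : Type*} [MeasurableSpace β]
    {Z : Ω → β} {f : β → ℝ} (hf : Measurable f) :
    StronglyMeasurable[MeasurableSpace.comap Z inferInstance] (fun ω => f (Z ω)) := by
  letI : MeasurableSpace Ω := MeasurableSpace.comap Z inferInstance
  exact Measurable.stronglyMeasurable (fun s hs => ⟨f ⁻¹' s, hf hs, rfl⟩)

private lemma int_mul_eq_of_condExp
    {Ω : Type*} [m0 : MeasurableSpace Ω] (P : Measure Ω) [IsProbabilityMeasure P]
    (m : MeasurableSpace Ω) (hm : m ≤ m0)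
    (W U V : Ω → ℝ) (hW : StronglyMeasurable[m] W)
    (hWU : Integrable (fun ω => W ω * U ω) P)
    (hUint : Integrable U P)
    (hUV : MeasureTheory.condExp m P U =ᵐ[P] V) :
    ∫ ω, W ω * U ω ∂P = ∫ ω, W ω * V ω ∂P := by
  haveI : SigmaFinite (P.trim hm) := by infer_instance
  have hWU' : Integrable (W * U) P := hWU
  have hmain := MeasureTheory.condExp_mul_of_stronglyMeasurable_left hW hWU' hUint
  calc ∫ ω, W ω * U ω ∂P = ∫ ω, (MeasureTheory.condExp m P (W * U)) ω ∂P :=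
        (MeasureTheory.integral_condExp hm).symm
    _ = ∫ ω, W ω * V ω ∂P := by
        refine integral_congr_ae (hmain.trans ?_)
        filter_upwards [hUV] with ω h
        simp only [Pi.mul_apply]
        rw [h]

theorem double_robustness_propensity
    {Ω : Type*} [MeasurableSpace Ω] (P : Measure Ω) [IsProbabilityMeasure P]
    {𝓩 : Type*} [MeasurableSpace 𝓩]
    (Y T : Ω → ℝ) (Z : Ω → 𝓩)
    (hYm : Measurable Y) (hTm : Measurable T) (hZm : Measurable Z)
    (hTbin : ∀ ω, T ω = 0 ∨ T ω = 1)
    (g0 g1 p : 𝓩 → ℝ) (hg0m : Measurable g0) (hg1m : Measurable g1) (hpm : Measurable p)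
    (hU : MeasureTheory.condExp
        (MeasurableSpace.comap (fun ω => (T ω, Z ω)) inferInstance) P
        (fun ω => Y ω - (if T ω = 1 then g1 (Z ω) else g0 (Z ω))) =ᵐ[P] 0)
    (hprop : (fun ω => p (Z ω)) =ᵐ[P]
        MeasureTheory.condExp (MeasurableSpace.comap Z inferInstance) P T)
    (hpbd : ∀ᵐ ω ∂P, 0 < p (Z ω) ∧ p (Z ω) < 1)
    (gt0 gt1 pt : 𝓩 → ℝ)
    (hgt0m : Measurable gt0) (hgt1m : Measurable gt1) (hptm : Measurable pt)
    (ε : ℝ) (hε0 : 0 < ε) (hε1 : ε < 1 / 2)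
    (hptbd : ∀ᵐ ω ∂P, ε ≤ pt (Z ω) ∧ pt (Z ω) ≤ 1 - ε)
    (θ : Ω → ℝ) (hθ : θ = fun ω => g1 (Z ω) - g0 (Z ω))
    (θt : Ω → ℝ) (hθt : θt = fun ω => gt1 (Z ω) - gt0 (Z ω))
    (Ht : Ω → ℝ) (hHt : Ht = fun ω => T ω / pt (Z ω) - (1 - T ω) / (1 - pt (Z ω)))
    (c : Ω → ℝ)
    (hc : c = fun ω => gt1 (Z ω) - gt0 (Z ω) +
      Ht ω * (Y ω - (if T ω = 1 then gt1 (Z ω) else gt0 (Z ω))))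
    (bias1 bias2 : Ω → ℝ)
    (hbias1 : bias1 = fun ω => (p (Z ω) / pt (Z ω) - 1) * (g1 (Z ω) - gt1 (Z ω)))
    (hbias2 : bias2 = fun ω =>
      (1 - (1 - p (Z ω)) / (1 - pt (Z ω))) * (g0 (Z ω) - gt0 (Z ω)))
    (cov : (Ω → ℝ) → (Ω → ℝ) → ℝ)
    (hcov : ∀ f g : Ω → ℝ, cov f g =
      ∫ ω, (f ω - ∫ m, f m ∂P) * (g ω - ∫ m, g m ∂P) ∂P)
    (hY2 : MemLp Y 2 P)
    (hg02 : MemLp (fun ω => g0 (Z ω)) 2 P) (hg12 : MemLp (fun ω => g1 (Z ω)) 2 P)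
    (hgt02 : MemLp (fun ω => gt0 (Z ω)) 2 P) (hgt12 : MemLp (fun ω => gt1 (Z ω)) 2 P)
    (hvar : 0 < cov θt θt)
    (hpteq : (fun ω => pt (Z ω)) =ᵐ[P] (fun ω => p (Z ω)))
    :
    (bias1 =ᵐ[P] 0) ∧ (bias2 =ᵐ[P] 0) ∧
    (∀ a b : ℝ,
      ((∫ ω, (c ω - a - b * (θt ω - ∫ m, θt m ∂P)) ∂P = 0) ∧
        (∫ ω, (c ω - a - b * (θt ω - ∫ m, θt m ∂P)) * (θt ω - ∫ m, θt m ∂P) ∂P = 0))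
      → (a = ∫ ω, θ ω ∂P ∧ b = cov θ θt / cov θt θt)) := by
  have hεlt1 : ε < 1 := by linarith
  -- basic a.e. bounds on pt
  have hptne : ∀ᵐ ω ∂P, pt (Z ω) ≠ 0 ∧ (1 : ℝ) - pt (Z ω) ≠ 0 := by
    filter_upwards [hptbd] with ω hb
    constructor
    · intro h; rw [h] at hb; linarith [hb.1]
    · intro h; have : pt (Z ω) = 1 := by linarith
      rw [this] at hb; linarith [hb.2]
  -- Part 1 and 2: biases vanish
  have hB1 : bias1 =ᵐ[P] 0 := by
    rw [hbias1]
    filter_upwards [hpteq, hptne] with ω he hne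
    have : p (Z ω) / pt (Z ω) = 1 := by rw [← he]; exact div_self hne.1
    simp [this]
  have hB2 : bias2 =ᵐ[P] 0 := by
    rw [hbias2]
    filter_upwards [hpteq, hptne] with ω he hne
    have : (1 - p (Z ω)) / (1 - pt (Z ω)) = 1 := by
      rw [← he]; exact div_self hne.2
    simp [this]
  refine ⟨hB1, hB2, ?_⟩
  -- measurable space setup
  have hm2 : MeasurableSpace.comap (fun ω => (T ω, Z ω)) inferInstance ≤ _ :=
    (hTm.prodMk hZm).comap_le
  have hmZ : MeasurableSpace.comap Z inferInstance ≤ _ := hZm.comap_le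
  -- helper: products
  have hL2mul : ∀ {f g : Ω → ℝ}, MemLp f 2 P → MemLp g 2 P →
      Integrable (fun ω => f ω * g ω) P := by
    intro f g hf hg
    have h := hg.smul (φ := f) hf (p := 2) (q := 2) (r := 1)
    exact memLp_one_iff_integrable.mp h
  have htopmul : ∀ {φ f : Ω → ℝ}, MemLp φ ⊤ P → MemLp f 2 P →
      MemLp (fun ω => φ ω * f ω) 2 P := by
    intro φ f hφ hf
    exact hf.smul hφ
  have hbddint : ∀ {φ g : Ω → ℝ}, MemLp φ ⊤ P → Integrable g P →
      Integrable (fun ω => φ ω * g ω) P := by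
    intro φ g hφ hg
    exact memLp_one_iff_integrable.mp ((memLp_one_iff_integrable.mpr hg).smul hφ)
  -- boundedness facts
  have hT2top : MemLp T ⊤ P := by
    refine memLp_top_of_bound hTm.aestronglyMeasurable 1 (Filter.Eventually.of_forall ?_)
    intro ω; rcases hTbin ω with h | h <;> simp [h]
  have h1T2top : MemLp (fun ω => 1 - T ω) ⊤ P := by
    refine memLp_top_of_bound (measurable_const.sub hTm).aestronglyMeasurable 1
      (Filter.Eventually.of_forall ?_)
    intro ω; rcases hTbin ω with h | h <;> simp [h]
  have hHt2top : MemLp Ht ⊤ P := by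
    rw [hHt]
    refine memLp_top_of_bound ((hTm.div ((hptm.comp hZm))).sub
      ((measurable_const.sub hTm).div (measurable_const.sub (hptm.comp hZm)))).aestronglyMeasurable
      (1 / ε) ?_
    filter_upwards [hptbd] with ω hb
    rcases hTbin ω with h | h
    · have h1 : (1 : ℝ) - pt (Z ω) ≥ ε := by linarith [hb.2]
      have h2 : (0:ℝ) < 1 - pt (Z ω) := lt_of_lt_of_le hε0 h1
      rw [h]
      simp only [zero_div, zero_sub, norm_neg, sub_zero, Real.norm_eq_abs]
      rw [abs_div, abs_one, abs_of_pos h2]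
      exact one_div_le_one_div_of_le hε0 h1
    · have h1 : pt (Z ω) ≥ ε := hb.1
      have h2 : (0:ℝ) < pt (Z ω) := lt_of_lt_of_le hε0 h1
      rw [h]
      simp only [sub_self, zero_div, sub_zero, Real.norm_eq_abs]
      rw [abs_div, abs_one, abs_of_pos h2]
      exact one_div_le_one_div_of_le hε0 h1
  have hinvpt_top : MemLp (fun ω => 1 / pt (Z ω)) ⊤ P := by
    refine memLp_top_of_bound (measurable_const.div (hptm.comp hZm)).aestronglyMeasurable
      (1 / ε) ?_
    filter_upwards [hptbd] with ω hb
    have h2 : (0:ℝ) < pt (Z ω) := lt_of_lt_of_le hε0 hb.1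
    rw [Real.norm_eq_abs, abs_div, abs_one, abs_of_pos h2]
    exact one_div_le_one_div_of_le hε0 hb.1
  have hinv1pt_top : MemLp (fun ω => 1 / (1 - pt (Z ω))) ⊤ P := by
    refine memLp_top_of_bound
      (measurable_const.div (measurable_const.sub (hptm.comp hZm))).aestronglyMeasurable
      (1 / ε) ?_
    filter_upwards [hptbd] with ω hb
    have h1 : (1:ℝ) - pt (Z ω) ≥ ε := by linarith [hb.2]
    have h2 : (0:ℝ) < 1 - pt (Z ω) := lt_of_lt_of_le hε0 h1
    rw [Real.norm_eq_abs, abs_div, abs_one, abs_of_pos h2]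
    exact one_div_le_one_div_of_le hε0 h1
  -- selection functions in L2
  have hsel : ∀ f0 f1 : 𝓩 → ℝ,
      (fun ω => if T ω = 1 then f1 (Z ω) else f0 (Z ω)) =
        fun ω => T ω * f1 (Z ω) + (1 - T ω) * f0 (Z ω) := by
    intro f0 f1; funext ω
    rcases hTbin ω with h | h <;> norm_num [h]
  have hgT2 : MemLp (fun ω => if T ω = 1 then g1 (Z ω) else g0 (Z ω)) 2 P := by
    rw [hsel g0 g1]
    exact (htopmul hT2top hg12).add (htopmul h1T2top hg02)
  have hgtT2 : MemLp (fun ω => if T ω = 1 then gt1 (Z ω) else gt0 (Z ω)) 2 P := by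
    rw [hsel gt0 gt1]
    exact (htopmul hT2top hgt12).add (htopmul h1T2top hgt02)
  have hθ2 : MemLp θ 2 P := by rw [hθ]; exact hg12.sub hg02
  have hθt2 : MemLp θt 2 P := by rw [hθt]; exact hgt12.sub hgt02
  have hU2 : MemLp (fun ω => Y ω - (if T ω = 1 then g1 (Z ω) else g0 (Z ω))) 2 P :=
    hY2.sub hgT2
  have hc2 : MemLp c 2 P := by
    rw [hc]
    exact (hgt12.sub hgt02).add (htopmul hHt2top (hY2.sub hgtT2))
  -- the key identity
  have key : ∀ f : 𝓩 → ℝ, Measurable f → MemLp (fun ω => f (Z ω)) 2 P →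
      ∫ ω, c ω * f (Z ω) ∂P = ∫ ω, θ ω * f (Z ω) ∂P := by
    intro f hfm hf2
    set ψ1 : Ω → ℝ := fun ω => (1 / pt (Z ω)) * ((g1 (Z ω) - gt1 (Z ω)) * f (Z ω)) with hψ1
    set ψ0 : Ω → ℝ := fun ω => (1 / (1 - pt (Z ω))) * ((g0 (Z ω) - gt0 (Z ω)) * f (Z ω))
      with hψ0
    -- integrabilities
    have hfθt : Integrable (fun ω => θt ω * f (Z ω)) P := hL2mul hθt2 hf2
    have hIA : Integrable (fun ω => (Ht ω * f (Z ω)) * (Y ω -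
        (if T ω = 1 then g1 (Z ω) else g0 (Z ω)))) P :=
      hL2mul (htopmul hHt2top hf2) hU2
    have hI1 : Integrable (fun ω => (g1 (Z ω) - gt1 (Z ω)) * f (Z ω)) P :=
      hL2mul (hg12.sub hgt12) hf2
    have hI0 : Integrable (fun ω => (g0 (Z ω) - gt0 (Z ω)) * f (Z ω)) P :=
      hL2mul (hg02.sub hgt02) hf2
    have hIψ1 : Integrable ψ1 P := hbddint hinvpt_top hI1
    have hIψ0 : Integrable ψ0 P := hbddint hinv1pt_top hI0
    have hIψ1T : Integrable (fun ω => ψ1 ω * T ω) P := by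
      have := hbddint hT2top hIψ1
      refine this.congr (Filter.Eventually.of_forall fun ω => ?_)
      simp [hψ1]; ring
    have hIψ0T : Integrable (fun ω => ψ0 ω * T ω) P := by
      have := hbddint hT2top hIψ0
      refine this.congr (Filter.Eventually.of_forall fun ω => ?_)
      simp [hψ0]; ring
    have hIψ01T : Integrable (fun ω => ψ0 ω * (1 - T ω)) P := by
      have := hbddint h1T2top hIψ0
      refine this.congr (Filter.Eventually.of_forall fun ω => ?_)
      simp [hψ0]; ring
    -- term A is zero
    have hA : ∫ ω, (Ht ω * f (Z ω)) * (Y ω -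
        (if T ω = 1 then g1 (Z ω) else g0 (Z ω))) ∂P = 0 := by
      have hWs : StronglyMeasurable[(MeasurableSpace.comap (fun ω => (T ω, Z ω)) inferInstance)] (fun ω => Ht ω * f (Z ω)) := by
        rw [hHt]
        have : Measurable (fun q : ℝ × 𝓩 => (q.1 / pt q.2 - (1 - q.1) / (1 - pt q.2)) * f q.2) :=
          ((measurable_fst.div (hptm.comp measurable_snd)).sub
            ((measurable_const.sub measurable_fst).div
              (measurable_const.sub (hptm.comp measurable_snd)))).mul (hfm.comp measurable_snd)
        exact measurable_comap_aux (Z := fun ω => (T ω, Z ω)) this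
      have := int_mul_eq_of_condExp P (MeasurableSpace.comap (fun ω => (T ω, Z ω)) inferInstance) hm2 (fun ω => Ht ω * f (Z ω))
        (fun ω => Y ω - (if T ω = 1 then g1 (Z ω) else g0 (Z ω))) 0 hWs hIA
        (hU2.integrable one_le_two) hU
      simpa using this
    -- term B equalities
    have hcondT : MeasureTheory.condExp (MeasurableSpace.comap Z inferInstance) P T =ᵐ[P] (fun ω => p (Z ω)) := hprop.symm
    have hBψ1 : ∫ ω, ψ1 ω * T ω ∂P = ∫ ω, ψ1 ω * p (Z ω) ∂P := by
      have hWs : StronglyMeasurable[(MeasurableSpace.comap Z inferInstance)] ψ1 := by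
        have : Measurable (fun z : 𝓩 => (1 / pt z) * ((g1 z - gt1 z) * f z)) :=
          (measurable_const.div hptm).mul ((hg1m.sub hgt1m).mul hfm)
        exact measurable_comap_aux this
      exact int_mul_eq_of_condExp P (MeasurableSpace.comap Z inferInstance) hmZ ψ1 T (fun ω => p (Z ω)) hWs hIψ1T
        (hT2top.mono_exponent le_top |>.integrable le_rfl) hcondT
    have hBψ0 : ∫ ω, ψ0 ω * T ω ∂P = ∫ ω, ψ0 ω * p (Z ω) ∂P := by
      have hWs : StronglyMeasurable[(MeasurableSpace.comap Z inferInstance)] ψ0 := by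
        have : Measurable (fun z : 𝓩 => (1 / (1 - pt z)) * ((g0 z - gt0 z) * f z)) :=
          (measurable_const.div (measurable_const.sub hptm)).mul ((hg0m.sub hgt0m).mul hfm)
        exact measurable_comap_aux this
      exact int_mul_eq_of_condExp P (MeasurableSpace.comap Z inferInstance) hmZ ψ0 T (fun ω => p (Z ω)) hWs hIψ0T
        (hT2top.mono_exponent le_top |>.integrable le_rfl) hcondT
    -- a.e. simplifications
    have hae1 : ∫ ω, ψ1 ω * p (Z ω) ∂P = ∫ ω, (g1 (Z ω) - gt1 (Z ω)) * f (Z ω) ∂P := by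
      refine integral_congr_ae ?_
      filter_upwards [hpteq, hptne] with ω he hne
      simp only [hψ1]
      rw [← he]
      field_simp [hne.1]
    have hae0 : ∫ ω, ψ0 ω * (1 - p (Z ω)) ∂P = ∫ ω, (g0 (Z ω) - gt0 (Z ω)) * f (Z ω) ∂P := by
      refine integral_congr_ae ?_
      filter_upwards [hpteq, hptne] with ω he hne
      simp only [hψ0]
      rw [← he]
      field_simp [hne.2]
    have hBψ0' : ∫ ω, ψ0 ω * (1 - T ω) ∂P = ∫ ω, ψ0 ω * (1 - p (Z ω)) ∂P := by
      have e1 : ∫ ω, ψ0 ω * (1 - T ω) ∂P = ∫ ω, ψ0 ω ∂P - ∫ ω, ψ0 ω * T ω ∂P := by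
        rw [← integral_sub hIψ0 hIψ0T]
        congr 1; funext ω; ring
      have e2 : ∫ ω, ψ0 ω * (1 - p (Z ω)) ∂P = ∫ ω, ψ0 ω ∂P - ∫ ω, ψ0 ω * p (Z ω) ∂P := by
        have hp_top : MemLp (fun ω => p (Z ω)) ⊤ P := by
          refine memLp_top_of_bound (hpm.comp hZm).aestronglyMeasurable 1 ?_
          filter_upwards [hpbd] with ω hb
          rw [Real.norm_eq_abs, abs_of_pos hb.1]; linarith [hb.2]
        have hIψ0p : Integrable (fun ω => ψ0 ω * p (Z ω)) P := by
          have h1 : Integrable (fun ω => (1 / (1 - pt (Z ω))) *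
              (p (Z ω) * ((g0 (Z ω) - gt0 (Z ω)) * f (Z ω)))) P :=
            hbddint hinv1pt_top (hbddint hp_top hI0)
          refine h1.congr (Filter.Eventually.of_forall fun ω => ?_)
          simp only [hψ0]; ring
        rw [← integral_sub hIψ0 hIψ0p]
        congr 1; funext ω; ring
      rw [e1, e2, hBψ0]
    -- pointwise decomposition
    have hptws : ∀ ω, c ω * f (Z ω) =
        θt ω * f (Z ω) + (Ht ω * f (Z ω)) * (Y ω -
          (if T ω = 1 then g1 (Z ω) else g0 (Z ω))) +
        (ψ1 ω * T ω - ψ0 ω * (1 - T ω)) := by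
      intro ω
      rw [hc, hθt, hHt]
      simp only [hψ1, hψ0]
      rcases hTbin ω with h | h <;> rw [h] <;> norm_num <;> ring
    have hθptws : ∀ ω, θ ω * f (Z ω) =
        θt ω * f (Z ω) + ((g1 (Z ω) - gt1 (Z ω)) * f (Z ω)
          - (g0 (Z ω) - gt0 (Z ω)) * f (Z ω)) := by
      intro ω; rw [hθ, hθt]; ring
    have hsumA : Integrable (fun ω => θt ω * f (Z ω) + (Ht ω * f (Z ω)) * (Y ω -
        (if T ω = 1 then g1 (Z ω) else g0 (Z ω)))) P := hfθt.add hIA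
    have hsubB : Integrable (fun ω => ψ1 ω * T ω - ψ0 ω * (1 - T ω)) P := hIψ1T.sub hIψ01T
    have hI10 : Integrable (fun ω => (g1 (Z ω) - gt1 (Z ω)) * f (Z ω) -
        (g0 (Z ω) - gt0 (Z ω)) * f (Z ω)) P := hI1.sub hI0
    calc ∫ ω, c ω * f (Z ω) ∂P
        = ∫ ω, (θt ω * f (Z ω) + (Ht ω * f (Z ω)) * (Y ω -
            (if T ω = 1 then g1 (Z ω) else g0 (Z ω))) +
            (ψ1 ω * T ω - ψ0 ω * (1 - T ω))) ∂P := by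
          exact integral_congr_ae (Filter.Eventually.of_forall hptws)
      _ = (∫ ω, θt ω * f (Z ω) ∂P) + (∫ ω, (Ht ω * f (Z ω)) * (Y ω -
            (if T ω = 1 then g1 (Z ω) else g0 (Z ω))) ∂P) +
          ((∫ ω, ψ1 ω * T ω ∂P) - (∫ ω, ψ0 ω * (1 - T ω) ∂P)) := by
          rw [integral_add hsumA hsubB, integral_add hfθt hIA,
            integral_sub hIψ1T hIψ01T]
      _ = (∫ ω, θt ω * f (Z ω) ∂P) +
          ((∫ ω, (g1 (Z ω) - gt1 (Z ω)) * f (Z ω) ∂P) -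
           (∫ ω, (g0 (Z ω) - gt0 (Z ω)) * f (Z ω) ∂P)) := by
          rw [hA, hBψ1, hae1, hBψ0', hae0]; ring
      _ = ∫ ω, θ ω * f (Z ω) ∂P := by
          rw [← integral_sub hI1 hI0, ← integral_add hfθt hI10]
          exact (integral_congr_ae (Filter.Eventually.of_forall hθptws)).symm
  -- apply key
  have hc1 : Integrable c P := hc2.integrable one_le_two
  have hθ1 : Integrable θ P := hθ2.integrable one_le_two
  have hθt1 : Integrable θt P := hθt2.integrable one_le_two
  set μt : ℝ := ∫ m, θt m ∂P with hμt
  have hF22 : MemLp (fun ω => θt ω - μt) 2 P := hθt2.sub (memLp_const μt)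
  have hF2int : Integrable (fun ω => θt ω - μt) P := hθt1.sub (integrable_const μt)
  have hF2zero : ∫ ω, (θt ω - μt) ∂P = 0 := by
    rw [integral_sub hθt1 (integrable_const μt)]
    simp [hμt]
  have key1 : ∫ ω, c ω ∂P = ∫ ω, θ ω ∂P := by
    have := key (fun _ => 1) measurable_const (memLp_const 1)
    simpa using this
  have key2 : ∫ ω, c ω * (θt ω - μt) ∂P = ∫ ω, θ ω * (θt ω - μt) ∂P := by
    have h2 : MemLp (fun ω => (fun z => gt1 z - gt0 z - μt) (Z ω)) 2 P :=
      (hgt12.sub hgt02).sub (memLp_const μt)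
    have hkk := key (fun z => gt1 z - gt0 z - μt)
      ((hgt1m.sub hgt0m).sub measurable_const) h2
    have e : ∀ ω : Ω, (fun z => gt1 z - gt0 z - μt) (Z ω) = θt ω - μt := by
      intro ω; simp [hθt]
    calc ∫ ω, c ω * (θt ω - μt) ∂P
        = ∫ ω, c ω * (fun z => gt1 z - gt0 z - μt) (Z ω) ∂P := by
          refine integral_congr_ae (Filter.Eventually.of_forall fun ω => ?_)
          simp [hθt]
      _ = ∫ ω, θ ω * (fun z => gt1 z - gt0 z - μt) (Z ω) ∂P := hkk
      _ = ∫ ω, θ ω * (θt ω - μt) ∂P := by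
          refine integral_congr_ae (Filter.Eventually.of_forall fun ω => ?_)
          simp [hθt]
  -- covariances
  have hcovθ : cov θ θt = ∫ ω, θ ω * (θt ω - μt) ∂P := by
    rw [hcov θ θt, ← hμt]
    have : ∀ ω, (θ ω - ∫ m, θ m ∂P) * (θt ω - μt) =
        θ ω * (θt ω - μt) - (∫ m, θ m ∂P) * (θt ω - μt) := by intro ω; ring
    have IθF2 : Integrable (fun ω => θ ω * (θt ω - μt)) P := hL2mul hθ2 hF22
    have IEθF2 : Integrable (fun ω => (∫ m, θ m ∂P) * (θt ω - μt)) P :=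
      hF2int.const_mul _
    rw [integral_congr_ae (Filter.Eventually.of_forall this),
      integral_sub IθF2 IEθF2, integral_const_mul, hF2zero]
    ring
  have hcovθt : cov θt θt = ∫ ω, (θt ω - μt) * (θt ω - μt) ∂P := by
    rw [hcov θt θt, ← hμt]
  -- final algebra
  intro a b ⟨e1, e2⟩
  have ha : a = ∫ ω, θ ω ∂P := by
    have Ia : Integrable (fun ω => c ω - a) P := hc1.sub (integrable_const a)
    have Ib : Integrable (fun ω => b * (θt ω - μt)) P := hF2int.const_mul b
    have expand : ∫ ω, (c ω - a - b * (θt ω - μt)) ∂P =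
        (∫ ω, c ω ∂P) - a - b * ∫ ω, (θt ω - μt) ∂P := by
      rw [integral_sub Ia Ib, integral_sub hc1 (integrable_const a), integral_const_mul]
      simp
    rw [expand] at e1
    rw [hF2zero] at e1
    rw [key1] at e1
    linarith
  refine ⟨ha, ?_⟩
  have expand2 : ∫ ω, (c ω - a - b * (θt ω - μt)) * (θt ω - μt) ∂P =
      (∫ ω, c ω * (θt ω - μt) ∂P) - a * (∫ ω, (θt ω - μt) ∂P)
        - b * ∫ ω, (θt ω - μt) * (θt ω - μt) ∂P := by
    have hid : ∀ ω, (c ω - a - b * (θt ω - μt)) * (θt ω - μt) =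
        c ω * (θt ω - μt) - a * (θt ω - μt) - b * ((θt ω - μt) * (θt ω - μt)) := by
      intro ω; ring
    have IcF2 : Integrable (fun ω => c ω * (θt ω - μt)) P := hL2mul hc2 hF22
    have IaF2 : Integrable (fun ω => a * (θt ω - μt)) P := hF2int.const_mul a
    have IbFF : Integrable (fun ω => b * ((θt ω - μt) * (θt ω - μt))) P :=
      (hL2mul hF22 hF22).const_mul b
    have Isub : Integrable (fun ω => c ω * (θt ω - μt) - a * (θt ω - μt)) P := IcF2.sub IaF2
    rw [integral_congr_ae (Filter.Eventually.of_forall hid),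
      integral_sub Isub IbFF, integral_sub IcF2 IaF2,
      integral_const_mul, integral_const_mul]
  rw [expand2] at e2
  rw [hF2zero, key2, ← hcovθ, ← hcovθt] at e2
  have hne : cov θt θt ≠ 0 := ne_of_gt hvar
  field_simp
  linarith
end

section
/- (Double robustness in the outcome models.) Under the IRM with ML proxies, if additionally g̃_1(Z) = g_1(Z) and g̃_0(Z) = g_0(Z) almost surely, then bias₁ = 0 and bias₂ = 0 almost surely, and consequently the linear-projection coefficients of c(η̃) on (1, θ̃(Z) − E[θ̃(Z)]) equal (a₁, b₁) = (E[θ(Z)], Cov(θ(Z), θ̃(Z))/Var(θ̃(Z))), i.e., the coefficients of the best linear predictor of θ(Z) by θ̃(Z). -/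
open MeasureTheory ProbabilityTheory

lemma l2_mul_integrable {Ω : Type*} [MeasurableSpace Ω] {P : Measure Ω} [IsProbabilityMeasure P]
    {f g : Ω → ℝ} (hf : MemLp f 2 P) (hg : MemLp g 2 P) :
    Integrable (fun ω => f ω * g ω) P := by
  have h : MemLp (f • g) 1 P := hg.smul hf
  exact h.integrable le_rfl

lemma key_orth {Ω : Type*} {m : MeasurableSpace Ω} [mΩ : MeasurableSpace Ω]
    (hm : m ≤ mΩ) (P : Measure Ω) [IsProbabilityMeasure P]
    {U V : Ω → ℝ}
    (hUc : MeasureTheory.condExp m P U =ᵐ[P] 0)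
    (hUint : Integrable U P)
    (hV : StronglyMeasurable[m] V)
    (hint : Integrable (fun ω => V ω * U ω) P) :
    ∫ ω, V ω * U ω ∂P = 0 := by
  haveI : SigmaFinite (P.trim hm) := by infer_instance
  have h1' : ∫ ω, (P[fun ω => V ω * U ω|m]) ω ∂P = ∫ ω, V ω * U ω ∂P :=
    integral_condExp hm
  have h2' : P[fun ω => V ω * U ω|m] =ᵐ[P] fun ω => V ω * (P[U|m]) ω := by
    have := condExp_mul_of_stronglyMeasurable_left hV (show Integrable (V * U) P from hint) hUint
    exact this
  have h3' : (fun ω => V ω * (P[U|m]) ω) =ᵐ[P] 0 := by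
    filter_upwards [hUc] with ω h
    simp [h]
  have h4 := integral_congr_ae (h2'.trans h3')
  simp only [Pi.zero_apply, integral_zero] at h4
  rw [← h1', h4]

theorem double_robustness_outcomes
    {Ω : Type*} [MeasurableSpace Ω] (P : Measure Ω) [IsProbabilityMeasure P]
    {𝓩 : Type*} [MeasurableSpace 𝓩]
    (Y T : Ω → ℝ) (Z : Ω → 𝓩)
    (hYm : Measurable Y) (hTm : Measurable T) (hZm : Measurable Z)
    (hTbin : ∀ ω, T ω = 0 ∨ T ω = 1)
    (g0 g1 p : 𝓩 → ℝ) (hg0m : Measurable g0) (hg1m : Measurable g1) (hpm : Measurable p)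
    (hU : MeasureTheory.condExp
        (MeasurableSpace.comap (fun ω => (T ω, Z ω)) inferInstance) P
        (fun ω => Y ω - (if T ω = 1 then g1 (Z ω) else g0 (Z ω))) =ᵐ[P] 0)
    (hprop : (fun ω => p (Z ω)) =ᵐ[P]
        MeasureTheory.condExp (MeasurableSpace.comap Z inferInstance) P T)
    (hpbd : ∀ᵐ ω ∂P, 0 < p (Z ω) ∧ p (Z ω) < 1)
    (gt0 gt1 pt : 𝓩 → ℝ)
    (hgt0m : Measurable gt0) (hgt1m : Measurable gt1) (hptm : Measurable pt)
    (ε : ℝ) (hε0 : 0 < ε) (hε1 : ε < 1 / 2)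
    (hptbd : ∀ᵐ ω ∂P, ε ≤ pt (Z ω) ∧ pt (Z ω) ≤ 1 - ε)
    (θ : Ω → ℝ) (hθ : θ = fun ω => g1 (Z ω) - g0 (Z ω))
    (θt : Ω → ℝ) (hθt : θt = fun ω => gt1 (Z ω) - gt0 (Z ω))
    (Ht : Ω → ℝ) (hHt : Ht = fun ω => T ω / pt (Z ω) - (1 - T ω) / (1 - pt (Z ω)))
    (c : Ω → ℝ)
    (hc : c = fun ω => gt1 (Z ω) - gt0 (Z ω) +
      Ht ω * (Y ω - (if T ω = 1 then gt1 (Z ω) else gt0 (Z ω))))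
    (bias1 bias2 : Ω → ℝ)
    (hbias1 : bias1 = fun ω => (p (Z ω) / pt (Z ω) - 1) * (g1 (Z ω) - gt1 (Z ω)))
    (hbias2 : bias2 = fun ω =>
      (1 - (1 - p (Z ω)) / (1 - pt (Z ω))) * (g0 (Z ω) - gt0 (Z ω)))
    (cov : (Ω → ℝ) → (Ω → ℝ) → ℝ)
    (hcov : ∀ f g : Ω → ℝ, cov f g =
      ∫ ω, (f ω - ∫ m, f m ∂P) * (g ω - ∫ m, g m ∂P) ∂P)
    (hY2 : MemLp Y 2 P)
    (hg02 : MemLp (fun ω => g0 (Z ω)) 2 P) (hg12 : MemLp (fun ω => g1 (Z ω)) 2 P)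
    (hgt02 : MemLp (fun ω => gt0 (Z ω)) 2 P) (hgt12 : MemLp (fun ω => gt1 (Z ω)) 2 P)
    (hvar : 0 < cov θt θt)
    (hg1eq : (fun ω => gt1 (Z ω)) =ᵐ[P] (fun ω => g1 (Z ω)))
    (hg0eq : (fun ω => gt0 (Z ω)) =ᵐ[P] (fun ω => g0 (Z ω)))
    :
    (bias1 =ᵐ[P] 0) ∧ (bias2 =ᵐ[P] 0) ∧
    (∀ a b : ℝ,
      ((∫ ω, (c ω - a - b * (θt ω - ∫ m, θt m ∂P)) ∂P = 0) ∧
        (∫ ω, (c ω - a - b * (θt ω - ∫ m, θt m ∂P)) * (θt ω - ∫ m, θt m ∂P) ∂P = 0))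
      → (a = ∫ ω, θ ω ∂P ∧ b = cov θ θt / cov θt θt)) := by
  refine ⟨?_, ?_, ?_⟩
  · filter_upwards [hg1eq] with ω h
    simp [hbias1, h]
  · filter_upwards [hg0eq] with ω h
    simp [hbias2, h]
  intro a b hab
  obtain ⟨h1, h2⟩ := hab
  set μt : ℝ := ∫ m, θt m ∂P with hμt
  set X : Ω → ℝ := fun ω => θt ω - μt with hX
  have hm : MeasurableSpace.comap (fun ω => (T ω, Z ω)) inferInstance ≤ ‹MeasurableSpace Ω› :=
    measurable_iff_comap_le.mp (hTm.prodMk hZm)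
  set U : Ω → ℝ := fun ω => Y ω - (if T ω = 1 then g1 (Z ω) else g0 (Z ω)) with hUdef
  -- basic MemLp / integrability facts
  have hθt2 : MemLp θt 2 P := by rw [hθt]; exact hgt12.sub hgt02
  have hθtint : Integrable θt P := hθt2.integrable one_le_two
  have hX2 : MemLp X 2 P := by rw [hX]; exact hθt2.sub (memLp_const μt)
  have hXint : Integrable X P := hX2.integrable one_le_two
  have hset : MeasurableSet {ω | T ω = 1} := hTm (measurableSet_singleton 1)
  have hgTm : Measurable (fun ω => if T ω = 1 then g1 (Z ω) else g0 (Z ω)) :=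
    Measurable.ite hset (hg1m.comp hZm) (hg0m.comp hZm)
  have hgT2 : MemLp (fun ω => if T ω = 1 then g1 (Z ω) else g0 (Z ω)) 2 P := by
    refine MemLp.of_le ((hg12.norm).add (hg02.norm)) hgTm.aestronglyMeasurable ?_
    refine Filter.Eventually.of_forall fun ω => ?_
    have hnn : (0:ℝ) ≤ ‖g1 (Z ω)‖ + ‖g0 (Z ω)‖ := by positivity
    by_cases h : T ω = 1
    · simp only [h, if_true, Pi.add_apply]
      rw [Real.norm_eq_abs (‖g1 (Z ω)‖ + ‖g0 (Z ω)‖), abs_of_nonneg hnn]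
      exact le_add_of_nonneg_right (norm_nonneg _)
    · simp only [h, if_false, Pi.add_apply]
      rw [Real.norm_eq_abs (‖g1 (Z ω)‖ + ‖g0 (Z ω)‖), abs_of_nonneg hnn]
      exact le_add_of_nonneg_left (norm_nonneg _)
  have hU2 : MemLp U 2 P := by rw [hUdef]; exact hY2.sub hgT2
  have hUint : Integrable U P := hU2.integrable one_le_two
  -- boundedness and measurability of Ht
  have hHtm : Measurable Ht := by
    rw [hHt]
    exact (hTm.div (hptm.comp hZm)).sub
      ((measurable_const.sub hTm).div (measurable_const.sub (hptm.comp hZm)))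
  have hHtbd : ∀ᵐ ω ∂P, ‖Ht ω‖ ≤ 1 / ε := by
    filter_upwards [hptbd] with ω hω
    obtain ⟨hl, hr⟩ := hω
    have hpt0 : 0 < pt (Z ω) := lt_of_lt_of_le hε0 hl
    have hpt1 : 0 < 1 - pt (Z ω) := by linarith
    simp only [hHt, Real.norm_eq_abs]
    rcases hTbin ω with h | h
    · rw [h]
      have : (0:ℝ) / pt (Z ω) - (1 - 0) / (1 - pt (Z ω)) = -(1 / (1 - pt (Z ω))) := by
        field_simp
        ring
      rw [this, abs_neg, abs_of_pos (by positivity)]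
      apply one_div_le_one_div_of_le hε0
      linarith
    · rw [h]
      have : (1:ℝ) / pt (Z ω) - (1 - 1) / (1 - pt (Z ω)) = 1 / pt (Z ω) := by
        field_simp
        ring
      rw [this, abs_of_pos (by positivity)]
      exact one_div_le_one_div_of_le hε0 hl
  -- strong measurability w.r.t. the comap σ-algebra
  have hTZ : Measurable[MeasurableSpace.comap (fun ω => (T ω, Z ω)) inferInstance]
      (fun ω => (T ω, Z ω)) := measurable_iff_comap_le.mpr le_rfl
  have hHtSM : StronglyMeasurable[MeasurableSpace.comap (fun ω => (T ω, Z ω)) inferInstance]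
      Ht := by
    rw [hHt]
    have hφ : Measurable (fun q : ℝ × 𝓩 => q.1 / pt q.2 - (1 - q.1) / (1 - pt q.2)) :=
      (measurable_fst.div (hptm.comp measurable_snd)).sub
        ((measurable_const.sub measurable_fst).div
          (measurable_const.sub (hptm.comp measurable_snd)))
    exact (hφ.comp hTZ).stronglyMeasurable
  have hXSM : StronglyMeasurable[MeasurableSpace.comap (fun ω => (T ω, Z ω)) inferInstance]
      X := by
    rw [hX, hθt]
    have hψ : Measurable (fun q : ℝ × 𝓩 => gt1 q.2 - gt0 q.2 - μt) :=
      ((hgt1m.comp measurable_snd).sub (hgt0m.comp measurable_snd)).sub measurable_const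
    exact (hψ.comp hTZ).stronglyMeasurable
  -- orthogonality facts
  have hHtU_int : Integrable (fun ω => Ht ω * U ω) P :=
    hUint.bdd_mul hHtm.aestronglyMeasurable hHtbd
  have I1 : ∫ ω, Ht ω * U ω ∂P = 0 := key_orth hm P hU hUint hHtSM hHtU_int
  have hXU_int : Integrable (fun ω => X ω * U ω) P := l2_mul_integrable hX2 hU2
  have hHXU_int : Integrable (fun ω => (Ht ω * X ω) * U ω) P := by
    have h := hXU_int.bdd_mul hHtm.aestronglyMeasurable hHtbd
    have heq : (fun ω => Ht ω * (X ω * U ω)) = fun ω => (Ht ω * X ω) * U ω := by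
      funext ω; ring
    rwa [heq] at h
  have I2 : ∫ ω, (Ht ω * X ω) * U ω ∂P = 0 :=
    key_orth hm P hU hUint (hHtSM.mul hXSM) hHXU_int
  -- a.e. representation of c
  have hcU : c =ᵐ[P] fun ω => θt ω + Ht ω * U ω := by
    filter_upwards [hg1eq, hg0eq] with ω e1 e0
    rw [hc, hUdef, hθt]
    by_cases h : T ω = 1 <;> simp [h, e1, e0]
  -- integrability of c and c*X
  have hcint : Integrable c P :=
    (integrable_congr hcU).mpr (hθtint.add hHtU_int)
  have hXXint : Integrable (fun ω => X ω * X ω) P := l2_mul_integrable hX2 hX2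
  have hcXae : (fun ω => c ω * X ω) =ᵐ[P]
      fun ω => (X ω * X ω + μt * X ω) + (Ht ω * X ω) * U ω := by
    filter_upwards [hcU] with ω h
    rw [h]
    have hθtω : θt ω = X ω + μt := by rw [hX]; ring
    rw [hθtω]; ring
  have hcXint : Integrable (fun ω => c ω * X ω) P := by
    refine (integrable_congr hcXae).mpr ?_
    exact (hXXint.add (hXint.const_mul μt)).add hHXU_int
  -- values of the basic integrals
  have hIX : ∫ ω, X ω ∂P = 0 := by
    rw [hX]
    rw [integral_sub hθtint (integrable_const μt)]
    simp [hμt]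
  have hIc : ∫ ω, c ω ∂P = μt := by
    rw [integral_congr_ae hcU, integral_add hθtint hHtU_int, I1, ← hμt, add_zero]
  have hIXX : ∫ ω, X ω * X ω ∂P = cov θt θt := by
    rw [hcov θt θt]
  have hIcX : ∫ ω, c ω * X ω ∂P = cov θt θt := by
    have s1 : ∫ ω, ((X ω * X ω + μt * X ω) + (Ht ω * X ω) * U ω) ∂P
        = ∫ ω, (X ω * X ω + μt * X ω) ∂P + ∫ ω, (Ht ω * X ω) * U ω ∂P :=
      integral_add (hXXint.add (hXint.const_mul μt)) hHXU_int
    have s2 : ∫ ω, (X ω * X ω + μt * X ω) ∂P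
        = ∫ ω, X ω * X ω ∂P + ∫ ω, μt * X ω ∂P :=
      integral_add hXXint (hXint.const_mul μt)
    have s2' : ∫ ω, μt * X ω ∂P = μt * ∫ ω, X ω ∂P := integral_const_mul μt X
    rw [integral_congr_ae hcXae, s1, s2, s2', hIX, I2, hIXX]
    ring
  -- unravel the first normal equation
  have h1' : ∫ ω, (c ω - a - b * X ω) ∂P = 0 := h1
  have s3 : ∫ ω, (c ω - a - b * X ω) ∂P
      = ∫ ω, (c ω - a) ∂P - ∫ ω, b * X ω ∂P :=
    integral_sub (hcint.sub (integrable_const a)) (hXint.const_mul b)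
  have s4 : ∫ ω, (c ω - a) ∂P = ∫ ω, c ω ∂P - ∫ _ω, (a:ℝ) ∂P :=
    integral_sub hcint (integrable_const a)
  have s5 : ∫ _ω, (a:ℝ) ∂P = a := by simp
  have s6 : ∫ ω, b * X ω ∂P = b * ∫ ω, X ω ∂P := integral_const_mul b X
  rw [s3, s4, s5, s6, hIc, hIX] at h1'
  have ha : a = μt := by linarith
  -- unravel the second normal equation
  have h2' : ∫ ω, (c ω * X ω - (a * X ω + b * (X ω * X ω))) ∂P = 0 := by
    rw [← h2]
    apply integral_congr_ae
    apply Filter.Eventually.of_forall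
    intro ω
    simp only [hX]
    ring
  have s7 : ∫ ω, (c ω * X ω - (a * X ω + b * (X ω * X ω))) ∂P
      = ∫ ω, c ω * X ω ∂P - ∫ ω, (a * X ω + b * (X ω * X ω)) ∂P :=
    integral_sub hcXint ((hXint.const_mul a).add (hXXint.const_mul b))
  have s8 : ∫ ω, (a * X ω + b * (X ω * X ω)) ∂P
      = ∫ ω, a * X ω ∂P + ∫ ω, b * (X ω * X ω) ∂P :=
    integral_add (hXint.const_mul a) (hXXint.const_mul b)
  have s9 : ∫ ω, a * X ω ∂P = a * ∫ ω, X ω ∂P := integral_const_mul a X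
  have s10 : ∫ ω, b * (X ω * X ω) ∂P = b * ∫ ω, X ω * X ω ∂P :=
    integral_const_mul b _
  rw [s7, s8, s9, s10, hIcX, hIX, hIXX] at h2'
  have hb : b = 1 := by
    have hne : cov θt θt ≠ 0 := ne_of_gt hvar
    have hz : (1 - b) * cov θt θt = 0 := by linarith
    rcases mul_eq_zero.mp hz with h | h
    · linarith
    · exact absurd h hne
  -- identify the targets
  have hθeq : θ =ᵐ[P] θt := by
    filter_upwards [hg1eq, hg0eq] with ω e1' e0'
    rw [hθ, hθt]
    simp only [e1', e0']
  have hIθ : ∫ ω, θ ω ∂P = μt := by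
    rw [integral_congr_ae hθeq, ← hμt]
  have hcovθ : cov θ θt = cov θt θt := by
    rw [hcov θ θt, hcov θt θt,
      show (∫ m, θ m ∂P) = ∫ m, θt m ∂P from integral_congr_ae hθeq]
    exact integral_congr_ae (by filter_upwards [hθeq] with ω h; rw [h])
  refine ⟨by rw [hIθ, ha], ?_⟩
  rw [hcovθ, div_self (ne_of_gt hvar), hb]
end

section
/- (Conditional mean-zero property of the true doubly robust correction.) Under the IRM, assume δ ≤ μ(Z) ≤ 1 − δ almost surely for some δ ∈ (0, 1/2), define H := T/μ(Z) − (1 − T)/(1 − μ(Z)), and assume Y, g_0(Z), g_1(Z) are integrable. Then E[(Y − g_T(Z))·H | σ(Z)] = 0 almost surely. -/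
open MeasureTheory ProbabilityTheory

theorem true_doubly_robust_correction_condexp_zero
    {Ω : Type*} [MeasurableSpace Ω] (P : Measure Ω) [IsProbabilityMeasure P]
    {𝓩 : Type*} [MeasurableSpace 𝓩]
    (Y T : Ω → ℝ) (Z : Ω → 𝓩)
    (hYm : Measurable Y) (hTm : Measurable T) (hZm : Measurable Z)
    (hTbin : ∀ ω, T ω = 0 ∨ T ω = 1)
    (g0 g1 p : 𝓩 → ℝ) (hg0m : Measurable g0) (hg1m : Measurable g1) (hpm : Measurable p)
    (hU : MeasureTheory.condExp
        (MeasurableSpace.comap (fun ω => (T ω, Z ω)) inferInstance) P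
        (fun ω => Y ω - (if T ω = 1 then g1 (Z ω) else g0 (Z ω))) =ᵐ[P] 0)
    (hprop : (fun ω => p (Z ω)) =ᵐ[P]
        MeasureTheory.condExp (MeasurableSpace.comap Z inferInstance) P T)
    (hpbd : ∀ᵐ ω ∂P, 0 < p (Z ω) ∧ p (Z ω) < 1)
    (δ : ℝ) (hδ0 : 0 < δ) (hδ1 : δ < 1 / 2)
    (hpδ : ∀ᵐ ω ∂P, δ ≤ p (Z ω) ∧ p (Z ω) ≤ 1 - δ)
    (H : Ω → ℝ)
    (hH : H = fun ω => T ω / p (Z ω) - (1 - T ω) / (1 - p (Z ω)))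
    (hYint : Integrable Y P)
    (hg0int : Integrable (fun ω => g0 (Z ω)) P) (hg1int : Integrable (fun ω => g1 (Z ω)) P)
    :
    MeasureTheory.condExp (MeasurableSpace.comap Z inferInstance) P
      (fun ω => (Y ω - (if T ω = 1 then g1 (Z ω) else g0 (Z ω))) * H ω) =ᵐ[P] 0 := by
  classical
  rename_i mΩ hPP m𝓩
  set m2 : MeasurableSpace Ω :=
    MeasurableSpace.comap (fun ω => (T ω, Z ω)) inferInstance with hm2def
  set m : MeasurableSpace Ω := MeasurableSpace.comap Z inferInstance with hmdef
  set f : Ω → ℝ := fun ω => Y ω - (if T ω = 1 then g1 (Z ω) else g0 (Z ω)) with hf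
  have hφ : Measurable[mΩ] (fun ω => (T ω, Z ω)) := Measurable.prodMk hTm hZm
  have hm2Ω : m2 ≤ mΩ := hφ.comap_le
  have hmm2 : m ≤ m2 := by
    rintro _ ⟨s, hs, rfl⟩
    exact ⟨Prod.snd ⁻¹' s, measurable_snd hs, rfl⟩
  have hmΩ : m ≤ mΩ := hmm2.trans hm2Ω
  have hitem : Measurable[mΩ] (fun ω => if T ω = 1 then g1 (Z ω) else g0 (Z ω)) :=
    Measurable.ite (hTm (measurableSet_singleton 1)) (hg1m.comp hZm) (hg0m.comp hZm)
  have hfm : Measurable[mΩ] f := hYm.sub hitem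
  have hφm2 : Measurable[m2] (fun ω => (T ω, Z ω)) := measurable_iff_comap_le.mpr le_rfl
  have hTm2 : Measurable[m2] T := measurable_fst.comp hφm2
  have hpZm2 : Measurable[m2] (fun ω => p (Z ω)) := (hpm.comp measurable_snd).comp hφm2
  have hHm2 : Measurable[m2] H := by
    rw [hH]
    exact (hTm2.div hpZm2).sub ((measurable_const.sub hTm2).div (measurable_const.sub hpZm2))
  have hHmΩ : Measurable[mΩ] H := hHm2.mono hm2Ω le_rfl
  -- f is integrable
  have hite_int : Integrable (fun ω => if T ω = 1 then g1 (Z ω) else g0 (Z ω)) P := by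
    refine Integrable.mono' (hg0int.abs.add hg1int.abs) hitem.aestronglyMeasurable ?_
    filter_upwards with ω
    by_cases h : T ω = 1
    · simp only [h, if_true, Real.norm_eq_abs, Pi.add_apply]
      exact le_add_of_nonneg_left (abs_nonneg _)
    · simp only [h, if_false, Real.norm_eq_abs, Pi.add_apply]
      exact le_add_of_nonneg_right (abs_nonneg _)
  have hfint : Integrable f P := hYint.sub hite_int
  -- a.e. bound on H
  have hHbd : ∀ᵐ ω ∂P, ‖H ω‖ ≤ 1 / δ := by
    filter_upwards [hpδ] with ω hω
    obtain ⟨h1, h2⟩ := hω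
    rw [hH]
    show ‖T ω / p (Z ω) - (1 - T ω) / (1 - p (Z ω))‖ ≤ 1 / δ
    rcases hTbin ω with h | h
    · have hp1 : δ ≤ 1 - p (Z ω) := by linarith
      have hpos : (0:ℝ) < 1 - p (Z ω) := lt_of_lt_of_le hδ0 hp1
      rw [h]
      simp only [zero_div, zero_sub, sub_zero, norm_neg, Real.norm_eq_abs]
      rw [abs_of_nonneg (by positivity)]
      rw [div_le_div_iff₀ hpos hδ0]
      linarith
    · have hp0 : (0:ℝ) < p (Z ω) := lt_of_lt_of_le hδ0 h1
      rw [h]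
      simp only [sub_self, zero_div, sub_zero, Real.norm_eq_abs]
      rw [abs_of_nonneg (by positivity)]
      rw [div_le_div_iff₀ hp0 hδ0]
      linarith
  -- integrability of f * H
  have hfHint : Integrable (fun ω => f ω * H ω) P := by
    refine Integrable.mono' (hfint.norm.smul (1/δ)) (hfm.mul hHmΩ).aestronglyMeasurable ?_
    filter_upwards [hHbd] with ω hω
    simp only [Pi.smul_apply, smul_eq_mul, norm_mul, Real.norm_eq_abs]
    calc ‖f ω‖ * ‖H ω‖ ≤ ‖f ω‖ * (1/δ) := mul_le_mul_of_nonneg_left hω (norm_nonneg _)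
      _ = 1/δ * ‖f ω‖ := mul_comm _ _
      _ = 1/δ * |f ω| := by rw [Real.norm_eq_abs]
  -- pull out H
  have hmul : (fun ω => f ω * H ω) = H * f := by ext ω; exact mul_comm _ _
  have hpull : condExp m2 P (fun ω => f ω * H ω) =ᵐ[P] fun ω => H ω * condExp m2 P f ω := by
    rw [hmul]
    exact condExp_mul_of_stronglyMeasurable_left hHm2.stronglyMeasurable (by rwa [← hmul]) hfint
  have hzero : condExp m2 P (fun ω => f ω * H ω) =ᵐ[P] 0 := by
    filter_upwards [hpull, hU] with ω h1 h2
    rw [h1]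
    show H ω * condExp m2 P f ω = 0
    have h3 : condExp m2 P f ω = 0 := h2
    rw [h3, mul_zero]
  calc condExp m P (fun ω => f ω * H ω)
      =ᵐ[P] condExp m P (condExp m2 P (fun ω => f ω * H ω)) :=
        (condExp_condExp_of_le hmm2 hm2Ω).symm
    _ =ᵐ[P] condExp m P 0 := condExp_congr_ae hzero
    _ =ᵐ[P] 0 := by rw [condExp_zero]
end

section
/- (Population identification of the ATET score with true nuisances.) Under the IRM, assume δ ≤ μ(Z) ≤ 1 − δ almost surely for some δ ∈ (0, 1/2), define H := T/μ(Z) − (1 − T)/(1 − μ(Z)), assume P(T = 1) > 0, and assume Y, g_0(Z), g_1(Z) are integrable. Then E[(T/E[T])·(g_1(Z) − g_0(Z)) + (μ(Z)/E[T])·(Y − g_T(Z))·H] = E[θ(Z) | T = 1], i.e., the population version of the doubly robust ATET score with true nuisance functions identifies the average treatment effect on the treated θ_ATET := E[g_1(Z) − g_0(Z) | T = 1]. -/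
open MeasureTheory ProbabilityTheory

lemma pullout_zero_aux {Ω : Type*} {mΩ : MeasurableSpace Ω} (P : Measure Ω)
    [IsProbabilityMeasure P] {m : MeasurableSpace Ω}
    (hle : m ≤ mΩ) {f U : Ω → ℝ}
    (hfm : Measurable[m] f) (hUint : Integrable U P)
    (hfU : Integrable (fun ω => f ω * U ω) P)
    (hU : MeasureTheory.condExp m P U =ᵐ[P] 0) :
    ∫ ω, f ω * U ω ∂P = 0 := by
  haveI : SigmaFinite (P.trim hle) := inferInstance
  rw [← integral_condExp hle (f := fun ω => f ω * U ω)]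
  have h2 : P[fun ω => f ω * U ω|m] =ᵐ[P] fun ω => f ω * (P[U|m]) ω :=
    condExp_mul_of_stronglyMeasurable_left hfm.stronglyMeasurable hfU hUint
  have h3 : (fun ω => f ω * (P[U|m]) ω) =ᵐ[P] 0 := by
    filter_upwards [hU] with ω hω
    simp only [Pi.zero_apply] at hω ⊢
    rw [hω, mul_zero]
  rw [integral_congr_ae (h2.trans h3)]
  simp

theorem atet_score_identification
    {Ω : Type*} [MeasurableSpace Ω] (P : Measure Ω) [IsProbabilityMeasure P]
    {𝓩 : Type*} [MeasurableSpace 𝓩]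
    (Y T : Ω → ℝ) (Z : Ω → 𝓩)
    (hYm : Measurable Y) (hTm : Measurable T) (hZm : Measurable Z)
    (hTbin : ∀ ω, T ω = 0 ∨ T ω = 1)
    (g0 g1 p : 𝓩 → ℝ) (hg0m : Measurable g0) (hg1m : Measurable g1) (hpm : Measurable p)
    (hU : MeasureTheory.condExp
        (MeasurableSpace.comap (fun ω => (T ω, Z ω)) inferInstance) P
        (fun ω => Y ω - (if T ω = 1 then g1 (Z ω) else g0 (Z ω))) =ᵐ[P] 0)
    (hprop : (fun ω => p (Z ω)) =ᵐ[P]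
        MeasureTheory.condExp (MeasurableSpace.comap Z inferInstance) P T)
    (hpbd : ∀ᵐ ω ∂P, 0 < p (Z ω) ∧ p (Z ω) < 1)
    (θ : Ω → ℝ) (hθ : θ = fun ω => g1 (Z ω) - g0 (Z ω))
    (δ : ℝ) (hδ0 : 0 < δ) (hδ1 : δ < 1 / 2)
    (hpδ : ∀ᵐ ω ∂P, δ ≤ p (Z ω) ∧ p (Z ω) ≤ 1 - δ)
    (H : Ω → ℝ)
    (hH : H = fun ω => T ω / p (Z ω) - (1 - T ω) / (1 - p (Z ω)))
    (hT1 : 0 < P {ω | T ω = 1})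
    (hYint : Integrable Y P)
    (hg0int : Integrable (fun ω => g0 (Z ω)) P) (hg1int : Integrable (fun ω => g1 (Z ω)) P)
    :
    ∫ ω, ((T ω / ∫ m, T m ∂P) * (g1 (Z ω) - g0 (Z ω)) +
        (p (Z ω) / ∫ m, T m ∂P) *
          (Y ω - (if T ω = 1 then g1 (Z ω) else g0 (Z ω))) * H ω) ∂P =
      ∫ ω, θ ω ∂(ProbabilityTheory.cond P {ω | T ω = 1}) := by
  subst hθ hH
  set A : Set Ω := {ω | T ω = 1} with hA
  have hAm : MeasurableSet A := hTm (measurableSet_singleton 1)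
  have hTind : T = A.indicator (fun _ => (1:ℝ)) := by
    funext ω
    rcases hTbin ω with h | h <;>
      simp [Set.indicator, hA, Set.mem_setOf_eq, h]
  have hcT : ∫ m, T m ∂P = (P A).toReal := by
    rw [hTind, integral_indicator_const (1:ℝ) hAm, smul_eq_mul, mul_one]
    rfl
  set c := (P A).toReal with hc
  have hc0 : 0 < c := ENNReal.toReal_pos hT1.ne' (measure_ne_top P A)
  set U : Ω → ℝ := fun ω => Y ω - (if T ω = 1 then g1 (Z ω) else g0 (Z ω)) with hUdef
  set f : Ω → ℝ := fun ω => p (Z ω) * (T ω / p (Z ω) - (1 - T ω) / (1 - p (Z ω))) with hfdef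
  have hle : MeasurableSpace.comap (fun ω => (T ω, Z ω)) inferInstance ≤
      ‹MeasurableSpace Ω› := (hTm.prodMk hZm).comap_le
  have hTZ : Measurable[MeasurableSpace.comap (fun ω => (T ω, Z ω)) inferInstance]
      (fun ω => (T ω, Z ω)) := measurable_iff_comap_le.mpr le_rfl
  have hTm' : Measurable[MeasurableSpace.comap (fun ω => (T ω, Z ω)) inferInstance] T :=
    measurable_fst.comp hTZ
  have hZm' : Measurable[MeasurableSpace.comap (fun ω => (T ω, Z ω)) inferInstance] Z :=
    measurable_snd.comp hTZ
  have hfm : Measurable[MeasurableSpace.comap (fun ω => (T ω, Z ω)) inferInstance] f := by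
    apply ((hpm.comp hZm').mul _)
    exact (hTm'.div (hpm.comp hZm')).sub
      ((measurable_const.sub hTm').div (measurable_const.sub (hpm.comp hZm')))
  have hitem : Measurable (fun ω => if T ω = 1 then g1 (Z ω) else g0 (Z ω)) :=
    Measurable.ite (hTm (measurableSet_singleton 1)) (hg1m.comp hZm) (hg0m.comp hZm)
  have hiteint : Integrable (fun ω => if T ω = 1 then g1 (Z ω) else g0 (Z ω)) P := by
    refine Integrable.mono' (hg1int.abs.add hg0int.abs) hitem.aestronglyMeasurable ?_
    filter_upwards with ω
    by_cases h : T ω = 1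
    · simp only [h, if_pos, Real.norm_eq_abs, if_true]
      exact le_add_of_nonneg_right (abs_nonneg _)
    · simp only [h, if_false, Real.norm_eq_abs, if_neg h]
      exact le_add_of_nonneg_left (abs_nonneg _)
  have hUint : Integrable U P := hYint.sub hiteint
  have hfbd : ∀ᵐ ω ∂P, ‖f ω‖ ≤ 1 + (1 - δ) / δ := by
    filter_upwards [hpδ, hpbd] with ω ⟨h1, h2⟩ ⟨h3, h4⟩
    have hδ1' : (0:ℝ) ≤ (1 - δ) / δ := div_nonneg (by linarith) hδ0.le
    rcases hTbin ω with h | h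
    · have hf : f ω = -(p (Z ω) / (1 - p (Z ω))) := by
        simp only [hfdef, h]
        field_simp
        ring
      rw [hf, norm_neg, Real.norm_eq_abs, abs_of_nonneg
        (div_nonneg h3.le (by linarith))]
      have : p (Z ω) / (1 - p (Z ω)) ≤ (1 - δ) / δ :=
        div_le_div₀ (by linarith) h2 hδ0 (by linarith)
      linarith
    · have hf : f ω = 1 := by
        simp only [hfdef, h]
        field_simp
        ring
      rw [hf]; simp; linarith
  have hfUint : Integrable (fun ω => f ω * U ω) P :=
    hUint.bdd_mul ((hfm.mono hle le_rfl).aestronglyMeasurable) hfbd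
  have hzero : ∫ ω, f ω * U ω ∂P = 0 :=
    pullout_zero_aux P hle hfm hUint hfUint hU
  have hTθint : Integrable (fun ω => T ω * (g1 (Z ω) - g0 (Z ω))) P := by
    refine (hg1int.sub hg0int).bdd_mul hTm.aestronglyMeasurable (c := 1) ?_
    filter_upwards with ω
    rcases hTbin ω with h | h <;> simp [h]
  have key : ∫ ω, ((T ω / ∫ m, T m ∂P) * (g1 (Z ω) - g0 (Z ω)) +
        (p (Z ω) / ∫ m, T m ∂P) * U ω *
          (T ω / p (Z ω) - (1 - T ω) / (1 - p (Z ω)))) ∂P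
      = c⁻¹ * ∫ ω, T ω * (g1 (Z ω) - g0 (Z ω)) ∂P := by
    have heq : ∀ ω, (T ω / ∫ m, T m ∂P) * (g1 (Z ω) - g0 (Z ω)) +
        (p (Z ω) / ∫ m, T m ∂P) * U ω *
          (T ω / p (Z ω) - (1 - T ω) / (1 - p (Z ω)))
        = c⁻¹ * (T ω * (g1 (Z ω) - g0 (Z ω))) + c⁻¹ * (f ω * U ω) := by
      intro ω; rw [hcT]; simp only [hfdef]; ring
    simp_rw [heq]
    rw [integral_add (hTθint.const_mul _) (hfUint.const_mul _),
      integral_const_mul, integral_const_mul, hzero, mul_zero, add_zero]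
  rw [key]
  have hTθ : (fun ω => T ω * (g1 (Z ω) - g0 (Z ω))) =
      A.indicator (fun ω => g1 (Z ω) - g0 (Z ω)) := by
    funext ω
    rcases hTbin ω with h | h <;>
      simp [Set.indicator, hA, Set.mem_setOf_eq, h]
  rw [hTθ, integral_indicator hAm]
  rw [ProbabilityTheory.cond, integral_smul_measure, ENNReal.toReal_inv, smul_eq_mul, ← hc]
end

section
/- (Population identification of the GATE score with true nuisances.) Under the IRM, assume δ ≤ μ(Z) ≤ 1 − δ almost surely for some δ ∈ (0, 1/2), define H := T/μ(Z) − (1 − T)/(1 − μ(Z)), let G ⊆ 𝒵 be a measurable set with P(Z ∈ G) > 0, and assume Y, g_0(Z), g_1(Z) are integrable. Then E[(𝟙(Z ∈ G)/P(Z ∈ G))·(g_1(Z) − g_0(Z) + (Y − g_T(Z))·H)] = E[θ(Z) | Z ∈ G], i.e., the population version of the doubly robust GATE score with true nuisance functions identifies the group average treatment effect θ_G := E[g_1(Z) − g_0(Z) | Z ∈ G]. -/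
open MeasureTheory ProbabilityTheory

theorem gate_score_identification
    {Ω : Type*} [MeasurableSpace Ω] (P : Measure Ω) [IsProbabilityMeasure P]
    {𝓩 : Type*} [MeasurableSpace 𝓩]
    (Y T : Ω → ℝ) (Z : Ω → 𝓩)
    (hYm : Measurable Y) (hTm : Measurable T) (hZm : Measurable Z)
    (hTbin : ∀ ω, T ω = 0 ∨ T ω = 1)
    (g0 g1 p : 𝓩 → ℝ) (hg0m : Measurable g0) (hg1m : Measurable g1) (hpm : Measurable p)
    (hU : MeasureTheory.condExp
        (MeasurableSpace.comap (fun ω => (T ω, Z ω)) inferInstance) P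
        (fun ω => Y ω - (if T ω = 1 then g1 (Z ω) else g0 (Z ω))) =ᵐ[P] 0)
    (hprop : (fun ω => p (Z ω)) =ᵐ[P]
        MeasureTheory.condExp (MeasurableSpace.comap Z inferInstance) P T)
    (hpbd : ∀ᵐ ω ∂P, 0 < p (Z ω) ∧ p (Z ω) < 1)
    (θ : Ω → ℝ) (hθ : θ = fun ω => g1 (Z ω) - g0 (Z ω))
    (δ : ℝ) (hδ0 : 0 < δ) (hδ1 : δ < 1 / 2)
    (hpδ : ∀ᵐ ω ∂P, δ ≤ p (Z ω) ∧ p (Z ω) ≤ 1 - δ)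
    (H : Ω → ℝ)
    (hH : H = fun ω => T ω / p (Z ω) - (1 - T ω) / (1 - p (Z ω)))
    (G : Set 𝓩) (hGm : MeasurableSet G) (hPG : 0 < P {ω | Z ω ∈ G})
    (hYint : Integrable Y P)
    (hg0int : Integrable (fun ω => g0 (Z ω)) P) (hg1int : Integrable (fun ω => g1 (Z ω)) P)
    :
    ∫ ω, (Set.indicator G (fun _ => (1 : ℝ)) (Z ω) / (P {ω | Z ω ∈ G}).toReal) *
        (g1 (Z ω) - g0 (Z ω) +
          (Y ω - (if T ω = 1 then g1 (Z ω) else g0 (Z ω))) * H ω) ∂P =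
      ∫ ω, θ ω ∂(ProbabilityTheory.cond P {ω | Z ω ∈ G}) := by
  classical
  set S : Set Ω := {ω | Z ω ∈ G} with hS
  have hSm : MeasurableSet S := hZm hGm
  set c : ℝ := (P S).toReal with hc
  have hPSne : P S ≠ ⊤ := measure_ne_top P S
  have hc0 : 0 < c := ENNReal.toReal_pos hPG.ne' hPSne
  -- the "residual" U
  set U : Ω → ℝ := fun ω => Y ω - (if T ω = 1 then g1 (Z ω) else g0 (Z ω)) with hUdef
  -- measurability of the ite function
  have hitem : Measurable (fun ω => if T ω = 1 then g1 (Z ω) else g0 (Z ω)) :=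
    Measurable.ite (hTm (measurableSet_singleton 1)) (hg1m.comp hZm) (hg0m.comp hZm)
  have hiteint : Integrable (fun ω => if T ω = 1 then g1 (Z ω) else g0 (Z ω)) P := by
    refine Integrable.mono' (hg1int.norm.add hg0int.norm) hitem.aestronglyMeasurable ?_
    filter_upwards with ω
    by_cases h : T ω = 1
    · simp only [h, if_true, Pi.add_apply, Real.norm_eq_abs]
      exact le_add_of_le_of_nonneg le_rfl (abs_nonneg _)
    · simp only [h, if_false, Pi.add_apply, Real.norm_eq_abs]
      exact le_add_of_nonneg_of_le (abs_nonneg _) le_rfl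
  have hUint : Integrable U P := hYint.sub hiteint
  -- the weight W
  set f : Ω → ℝ := fun ω => Set.indicator G (fun _ => (1 : ℝ)) (Z ω) / c with hf
  set W : Ω → ℝ := fun ω => f ω * H ω with hW
  -- indicator bound
  have hind01 : ∀ ω, |Set.indicator G (fun _ => (1 : ℝ)) (Z ω)| ≤ 1 := by
    intro ω; by_cases h : Z ω ∈ G <;> simp [h]
  have hfb : ∀ ω, |f ω| ≤ 1 / c := by
    intro ω
    rw [hf, abs_div, abs_of_pos hc0]
    exact (div_le_div_iff_of_pos_right hc0).mpr (hind01 ω)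
  -- bound on H a.e.
  have hHb : ∀ᵐ ω ∂P, |H ω| ≤ 2 / δ := by
    filter_upwards [hpδ] with ω hp
    obtain ⟨h1, h2⟩ := hp
    have hp0 : 0 < p (Z ω) := lt_of_lt_of_le hδ0 h1
    have hp1 : δ ≤ 1 - p (Z ω) := by linarith
    have hT : |T ω| ≤ 1 := by rcases hTbin ω with h | h <;> simp [h]
    have hT' : |1 - T ω| ≤ 1 := by rcases hTbin ω with h | h <;> simp [h]
    have e1 : |T ω / p (Z ω)| ≤ 1 / δ := by
      rw [abs_div, abs_of_pos hp0]
      exact div_le_div₀ (by norm_num) hT hδ0 h1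
    have e2 : |(1 - T ω) / (1 - p (Z ω))| ≤ 1 / δ := by
      rw [abs_div, abs_of_pos (by linarith : (0:ℝ) < 1 - p (Z ω))]
      exact div_le_div₀ (by norm_num) hT' hδ0 hp1
    calc |H ω| ≤ |T ω / p (Z ω)| + |(1 - T ω) / (1 - p (Z ω))| := by
          rw [hH]; exact abs_sub _ _
      _ ≤ 1 / δ + 1 / δ := add_le_add e1 e2
      _ = 2 / δ := by ring
  -- the σ-algebra m = σ(T, Z)
  have hm : MeasurableSpace.comap (fun ω => (T ω, Z ω)) inferInstance
      ≤ (inferInstance : MeasurableSpace Ω) := (hTm.prodMk hZm).comap_le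
  -- W is measurable with respect to m
  have hWm : StronglyMeasurable[MeasurableSpace.comap (fun ω => (T ω, Z ω)) inferInstance] W := by
    have hφ : Measurable (fun x : ℝ × 𝓩 =>
        (Set.indicator G (fun _ => (1 : ℝ)) x.2 / c) *
          (x.1 / p x.2 - (1 - x.1) / (1 - p x.2))) := by
      apply Measurable.mul
      · exact ((measurable_const.indicator hGm).comp measurable_snd).div measurable_const
      · exact (measurable_fst.div ((hpm.comp measurable_snd))).sub
          ((measurable_const.sub measurable_fst).div
            (measurable_const.sub (hpm.comp measurable_snd)))
    have hg : Measurable[MeasurableSpace.comap (fun ω => (T ω, Z ω)) inferInstance]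
        (fun ω => (T ω, Z ω)) := measurable_iff_comap_le.mpr le_rfl
    have : Measurable[MeasurableSpace.comap (fun ω => (T ω, Z ω)) inferInstance] W := by
      have := hφ.comp hg
      convert this using 1
      funext ω
      simp [hW, hf, hH]
    exact this.stronglyMeasurable
  have hWsm : AEStronglyMeasurable W P := ((hWm.mono hm).aestronglyMeasurable)
  -- W bounded a.e.
  have hWb : ∀ᵐ ω ∂P, |W ω| ≤ (1 / c) * (2 / δ) := by
    filter_upwards [hHb] with ω h
    rw [hW]
    calc |f ω * H ω| = |f ω| * |H ω| := abs_mul _ _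
      _ ≤ (1 / c) * (2 / δ) :=
        mul_le_mul (hfb ω) h (abs_nonneg _) (by positivity)
  -- Integrability of W * U
  have hWUint : Integrable (fun ω => W ω * U ω) P := by
    refine Integrable.mono' (hUint.norm.const_mul ((1 / c) * (2 / δ)))
      (hWsm.mul hUint.aestronglyMeasurable) ?_
    filter_upwards [hWb] with ω h
    rw [Real.norm_eq_abs, abs_mul]
    exact mul_le_mul_of_nonneg_right h (abs_nonneg _)
  -- the second term vanishes
  have hB : ∫ ω, W ω * U ω ∂P = 0 := by
    have h1 : ∫ ω, W ω * U ω ∂P = ∫ ω, (P[fun ω => W ω * U ω|MeasurableSpace.comap (fun ω => (T ω, Z ω)) inferInstance]) ω ∂P :=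
      (integral_condExp hm).symm
    have h2 : P[fun ω => W ω * U ω|MeasurableSpace.comap (fun ω => (T ω, Z ω)) inferInstance] =ᵐ[P] fun ω => W ω * (P[U|MeasurableSpace.comap (fun ω => (T ω, Z ω)) inferInstance]) ω := by
      have := condExp_mul_of_stronglyMeasurable_left (μ := P) hWm hWUint hUint
      filter_upwards [this] with ω h
      exact h
    have h3 : (fun ω => W ω * (P[U|MeasurableSpace.comap (fun ω => (T ω, Z ω)) inferInstance]) ω) =ᵐ[P] 0 := by
      filter_upwards [hU] with ω h
      simp [hUdef] at h
      simp only [Pi.zero_apply]; exact mul_eq_zero_of_right _ h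
    rw [h1, integral_congr_ae (h2.trans h3)]; simp
  -- the first term
  have hAint : Integrable (fun ω => f ω * (g1 (Z ω) - g0 (Z ω))) P := by
    refine Integrable.mono' ((hg1int.sub hg0int).norm.const_mul (1 / c))
      (((((measurable_const.indicator hGm).comp hZm).div measurable_const)).aestronglyMeasurable.mul
        ((hg1m.comp hZm).sub (hg0m.comp hZm)).aestronglyMeasurable) ?_
    filter_upwards with ω
    rw [Real.norm_eq_abs, abs_mul]
    exact mul_le_mul_of_nonneg_right (hfb ω) (abs_nonneg _)
  have hBint : Integrable (fun ω => W ω * U ω) P := hWUint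
  -- split the integral
  have hsplit : ∫ ω, (Set.indicator G (fun _ => (1 : ℝ)) (Z ω) / c) *
        (g1 (Z ω) - g0 (Z ω) + U ω * H ω) ∂P
      = (∫ ω, f ω * (g1 (Z ω) - g0 (Z ω)) ∂P) + ∫ ω, W ω * U ω ∂P := by
    rw [← integral_add hAint hBint]
    apply integral_congr_ae
    filter_upwards with ω
    simp only [hf, hW]
    ring
  -- compute the RHS
  have hRHS : ∫ ω, θ ω ∂(ProbabilityTheory.cond P S)
      = (1 / c) * ∫ ω, Set.indicator S θ ω ∂P := by
    rw [ProbabilityTheory.cond, integral_smul_measure, integral_indicator hSm,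
      ENNReal.toReal_inv, smul_eq_mul, one_div]
  have hA : ∫ ω, f ω * (g1 (Z ω) - g0 (Z ω)) ∂P
      = (1 / c) * ∫ ω, Set.indicator S θ ω ∂P := by
    rw [← integral_const_mul]
    apply integral_congr_ae
    filter_upwards with ω
    by_cases h : Z ω ∈ G
    · have hωS : ω ∈ S := h
      simp [hf, hθ, Set.indicator_of_mem h, Set.indicator_of_mem hωS]
    · have hωS : ω ∉ S := h
      simp [hf, Set.indicator_of_notMem h, Set.indicator_of_notMem hωS]
  calc ∫ ω, (Set.indicator G (fun _ => (1 : ℝ)) (Z ω) / (P S).toReal) *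
        (g1 (Z ω) - g0 (Z ω) +
          (Y ω - (if T ω = 1 then g1 (Z ω) else g0 (Z ω))) * H ω) ∂P
      = ∫ ω, (Set.indicator G (fun _ => (1 : ℝ)) (Z ω) / c) *
        (g1 (Z ω) - g0 (Z ω) + U ω * H ω) ∂P := rfl
    _ = (∫ ω, f ω * (g1 (Z ω) - g0 (Z ω)) ∂P) + ∫ ω, W ω * U ω ∂P := hsplit
    _ = (1 / c) * ∫ ω, Set.indicator S θ ω ∂P := by rw [hB, hA, add_zero]
    _ = ∫ ω, θ ω ∂(ProbabilityTheory.cond P S) := hRHS.symm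
end

section
/- (Product-form bound on the double-robustness bias, supporting the rate remark.) Under the IRM with ML proxies, the bias terms satisfy the Cauchy–Schwarz bounds |E[bias₁]| ≤ ε⁻¹ · ‖μ(Z) − μ̃(Z)‖_{L²(P)} · ‖g_1(Z) − g̃_1(Z)‖_{L²(P)} and |E[bias₂]| ≤ ε⁻¹ · ‖μ(Z) − μ̃(Z)‖_{L²(P)} · ‖g_0(Z) − g̃_0(Z)‖_{L²(P)}, provided μ(Z) − μ̃(Z), g_1(Z) − g̃_1(Z), and g_0(Z) − g̃_0(Z) are square-integrable. In particular, both bias expectations are bounded by a constant multiple of the product of the L² estimation errors of the propensity proxy and the outcome proxies. -/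
open MeasureTheory ProbabilityTheory

open MeasureTheory

lemma abs_mul_abs_integrable {Ω : Type*} [MeasurableSpace Ω] {P : Measure Ω}
    {a b : Ω → ℝ} (ha : MemLp a 2 P) (hb : MemLp b 2 P) :
    Integrable (fun ω => |a ω| * |b ω|) P := by
  have h1 : Integrable (fun ω => (a ω ^ 2 + b ω ^ 2) / 2) P :=
    (ha.integrable_sq.add hb.integrable_sq).div_const 2
  refine h1.mono' ((ha.1.norm.mul hb.1.norm).congr ?_) ?_
  · filter_upwards with ω; simp [Real.norm_eq_abs]
  · filter_upwards with ω
    rw [Real.norm_eq_abs, abs_mul, abs_abs, abs_abs]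
    nlinarith [sq_nonneg (|a ω| - |b ω|), sq_abs (a ω), sq_abs (b ω)]

lemma cs_integral {Ω : Type*} [MeasurableSpace Ω] {P : Measure Ω}
    {a b : Ω → ℝ} (ha : MemLp a 2 P) (hb : MemLp b 2 P) :
    ∫ ω, |a ω| * |b ω| ∂P ≤
      Real.sqrt (∫ ω, a ω ^ 2 ∂P) * Real.sqrt (∫ ω, b ω ^ 2 ∂P) := by
  set A := ∫ ω, a ω ^ 2 ∂P with hAdef
  set C := ∫ ω, b ω ^ 2 ∂P with hCdef
  set B := ∫ ω, |a ω| * |b ω| ∂P with hBdef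
  have hA : 0 ≤ A := integral_nonneg fun ω => sq_nonneg _
  have hC : 0 ≤ C := integral_nonneg fun ω => sq_nonneg _
  have hB : 0 ≤ B := integral_nonneg fun ω => mul_nonneg (abs_nonneg _) (abs_nonneg _)
  have hab := abs_mul_abs_integrable ha hb
  have hquad : ∀ t : ℝ, 0 ≤ A * t ^ 2 + (-2 * B) * t + C := by
    intro t
    have expand : ∀ ω, (t * |a ω| - |b ω|) ^ 2
        = t ^ 2 * a ω ^ 2 - (2 * t) * (|a ω| * |b ω|) + b ω ^ 2 := by
      intro ω
      have h1 := sq_abs (a ω); have h2 := sq_abs (b ω); nlinarith [sq_nonneg (t * |a ω| - |b ω|)]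
    have hI : ∫ ω, (t * |a ω| - |b ω|) ^ 2 ∂P = t ^ 2 * A - (2 * t) * B + C := by
      simp_rw [expand]
      have i1 : Integrable (fun ω => t ^ 2 * a ω ^ 2) P := ha.integrable_sq.const_mul _
      have i2 : Integrable (fun ω => 2 * t * (|a ω| * |b ω|)) P := hab.const_mul _
      have i12 : Integrable (fun ω => t ^ 2 * a ω ^ 2 - 2 * t * (|a ω| * |b ω|)) P := i1.sub i2
      rw [integral_add i12 hb.integrable_sq, integral_sub i1 i2,
        integral_const_mul, integral_const_mul]
    have h0 : 0 ≤ ∫ ω, (t * |a ω| - |b ω|) ^ 2 ∂P := integral_nonneg fun ω => sq_nonneg _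
    rw [hI] at h0; nlinarith
  have hquad' : ∀ t : ℝ, 0 ≤ A * (t * t) + (-2 * B) * t + C := by
    intro t; have := hquad t; nlinarith
  have hdisc := discrim_le_zero hquad'
  rw [discrim] at hdisc
  have hBsq : B ^ 2 ≤ A * C := by nlinarith
  have hs : B ≤ Real.sqrt (A * C) := by
    nlinarith [Real.sq_sqrt (mul_nonneg hA hC), Real.sqrt_nonneg (A * C)]
  rwa [Real.sqrt_mul hA] at hs

lemma bias_bound_aux {Ω : Type*} [MeasurableSpace Ω] (P : Measure Ω)
    (a b bias : Ω → ℝ) (ha : MemLp a 2 P) (hb : MemLp b 2 P)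
    (ε : ℝ) (hε : 0 < ε)
    (hbd : ∀ᵐ ω ∂P, |bias ω| ≤ ε⁻¹ * (|a ω| * |b ω|)) :
    |∫ ω, bias ω ∂P| ≤ ε⁻¹ * Real.sqrt (∫ ω, a ω ^ 2 ∂P) * Real.sqrt (∫ ω, b ω ^ 2 ∂P) := by
  have hab := abs_mul_abs_integrable ha hb
  calc |∫ ω, bias ω ∂P| ≤ ∫ ω, |bias ω| ∂P := by
        simpa [Real.norm_eq_abs] using norm_integral_le_integral_norm (μ := P) bias
    _ ≤ ∫ ω, ε⁻¹ * (|a ω| * |b ω|) ∂P :=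
        integral_mono_of_nonneg (Filter.Eventually.of_forall fun ω => abs_nonneg _)
          (hab.const_mul _) hbd
    _ = ε⁻¹ * ∫ ω, |a ω| * |b ω| ∂P := integral_const_mul _ _
    _ ≤ ε⁻¹ * (Real.sqrt (∫ ω, a ω ^ 2 ∂P) * Real.sqrt (∫ ω, b ω ^ 2 ∂P)) :=
        mul_le_mul_of_nonneg_left (cs_integral ha hb) (inv_nonneg.2 hε.le)
    _ = _ := (mul_assoc _ _ _).symm

theorem bias_product_form_bound
    {Ω : Type*} [MeasurableSpace Ω] (P : Measure Ω) [IsProbabilityMeasure P]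
    {𝓩 : Type*} [MeasurableSpace 𝓩]
    (Y T : Ω → ℝ) (Z : Ω → 𝓩)
    (hYm : Measurable Y) (hTm : Measurable T) (hZm : Measurable Z)
    (hTbin : ∀ ω, T ω = 0 ∨ T ω = 1)
    (g0 g1 p : 𝓩 → ℝ) (hg0m : Measurable g0) (hg1m : Measurable g1) (hpm : Measurable p)
    (hU : MeasureTheory.condExp
        (MeasurableSpace.comap (fun ω => (T ω, Z ω)) inferInstance) P
        (fun ω => Y ω - (if T ω = 1 then g1 (Z ω) else g0 (Z ω))) =ᵐ[P] 0)
    (hprop : (fun ω => p (Z ω)) =ᵐ[P]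
        MeasureTheory.condExp (MeasurableSpace.comap Z inferInstance) P T)
    (hpbd : ∀ᵐ ω ∂P, 0 < p (Z ω) ∧ p (Z ω) < 1)
    (gt0 gt1 pt : 𝓩 → ℝ)
    (hgt0m : Measurable gt0) (hgt1m : Measurable gt1) (hptm : Measurable pt)
    (ε : ℝ) (hε0 : 0 < ε) (hε1 : ε < 1 / 2)
    (hptbd : ∀ᵐ ω ∂P, ε ≤ pt (Z ω) ∧ pt (Z ω) ≤ 1 - ε)
    (bias1 bias2 : Ω → ℝ)
    (hbias1 : bias1 = fun ω => (p (Z ω) / pt (Z ω) - 1) * (g1 (Z ω) - gt1 (Z ω)))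
    (hbias2 : bias2 = fun ω =>
      (1 - (1 - p (Z ω)) / (1 - pt (Z ω))) * (g0 (Z ω) - gt0 (Z ω)))
    (hpdiff2 : MemLp (fun ω => p (Z ω) - pt (Z ω)) 2 P)
    (hg1diff2 : MemLp (fun ω => g1 (Z ω) - gt1 (Z ω)) 2 P)
    (hg0diff2 : MemLp (fun ω => g0 (Z ω) - gt0 (Z ω)) 2 P)
    :
    |∫ ω, bias1 ω ∂P| ≤ ε⁻¹ *
        Real.sqrt (∫ ω, (p (Z ω) - pt (Z ω)) ^ 2 ∂P) *
        Real.sqrt (∫ ω, (g1 (Z ω) - gt1 (Z ω)) ^ 2 ∂P) ∧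
    |∫ ω, bias2 ω ∂P| ≤ ε⁻¹ *
        Real.sqrt (∫ ω, (p (Z ω) - pt (Z ω)) ^ 2 ∂P) *
        Real.sqrt (∫ ω, (g0 (Z ω) - gt0 (Z ω)) ^ 2 ∂P) := by
  have hpZ2 : MemLp (fun ω => p (Z ω) - pt (Z ω)) 2 P := hpdiff2
  constructor
  · subst hbias1
    apply bias_bound_aux P (fun ω => p (Z ω) - pt (Z ω)) (fun ω => g1 (Z ω) - gt1 (Z ω)) _
      hpdiff2 hg1diff2 ε hε0
    filter_upwards [hptbd] with ω hω
    have hpt0 : 0 < pt (Z ω) := lt_of_lt_of_le hε0 hω.1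
    have hfac : p (Z ω) / pt (Z ω) - 1 = (p (Z ω) - pt (Z ω)) / pt (Z ω) := by
      field_simp
    rw [hfac, abs_mul, abs_div, abs_of_pos hpt0]
    calc |p (Z ω) - pt (Z ω)| / pt (Z ω) * |g1 (Z ω) - gt1 (Z ω)|
        ≤ |p (Z ω) - pt (Z ω)| / ε * |g1 (Z ω) - gt1 (Z ω)| := by
          apply mul_le_mul_of_nonneg_right _ (abs_nonneg _)
          exact div_le_div_of_nonneg_left (abs_nonneg _) hε0 hω.1
      _ = ε⁻¹ * (|p (Z ω) - pt (Z ω)| * |g1 (Z ω) - gt1 (Z ω)|) := by ring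
  · subst hbias2
    apply bias_bound_aux P (fun ω => p (Z ω) - pt (Z ω)) (fun ω => g0 (Z ω) - gt0 (Z ω)) _
      hpdiff2 hg0diff2 ε hε0
    filter_upwards [hptbd] with ω hω
    have hpt1 : 0 < 1 - pt (Z ω) := by linarith [hω.2]
    have hfac : 1 - (1 - p (Z ω)) / (1 - pt (Z ω)) = (p (Z ω) - pt (Z ω)) / (1 - pt (Z ω)) := by
      field_simp
      ring
    rw [hfac, abs_mul, abs_div, abs_of_pos hpt1]
    have hεle : ε ≤ 1 - pt (Z ω) := by linarith [hω.2]
    calc |p (Z ω) - pt (Z ω)| / (1 - pt (Z ω)) * |g0 (Z ω) - gt0 (Z ω)|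
        ≤ |p (Z ω) - pt (Z ω)| / ε * |g0 (Z ω) - gt0 (Z ω)| := by
          apply mul_le_mul_of_nonneg_right _ (abs_nonneg _)
          exact div_le_div_of_nonneg_left (abs_nonneg _) hε0 hεle
      _ = ε⁻¹ * (|p (Z ω) - pt (Z ω)| * |g0 (Z ω) - gt0 (Z ω)|) := by ring
end

section
/- (Conditional expectation of the plug-in correction term.) Under the IRM with ML proxies, the correction term of the doubly robust label satisfies E[H̃·(Y − g̃_T(Z)) | σ(Z)] = (μ(Z)/μ̃(Z))·(g_1(Z) − g̃_1(Z)) − ((1 − μ(Z))/(1 − μ̃(Z)))·(g_0(Z) − g̃_0(Z)) almost surely. -/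
open MeasureTheory ProbabilityTheory

theorem condexp_plugin_correction
    {Ω : Type*} [MeasurableSpace Ω] (P : Measure Ω) [IsProbabilityMeasure P]
    {𝓩 : Type*} [MeasurableSpace 𝓩]
    (Y T : Ω → ℝ) (Z : Ω → 𝓩)
    (hYm : Measurable Y) (hTm : Measurable T) (hZm : Measurable Z)
    (hTbin : ∀ ω, T ω = 0 ∨ T ω = 1)
    (g0 g1 p : 𝓩 → ℝ) (hg0m : Measurable g0) (hg1m : Measurable g1) (hpm : Measurable p)
    (hU : MeasureTheory.condExp
        (MeasurableSpace.comap (fun ω => (T ω, Z ω)) inferInstance) P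
        (fun ω => Y ω - (if T ω = 1 then g1 (Z ω) else g0 (Z ω))) =ᵐ[P] 0)
    (hprop : (fun ω => p (Z ω)) =ᵐ[P]
        MeasureTheory.condExp (MeasurableSpace.comap Z inferInstance) P T)
    (hpbd : ∀ᵐ ω ∂P, 0 < p (Z ω) ∧ p (Z ω) < 1)
    (gt0 gt1 pt : 𝓩 → ℝ)
    (hgt0m : Measurable gt0) (hgt1m : Measurable gt1) (hptm : Measurable pt)
    (ε : ℝ) (hε0 : 0 < ε) (hε1 : ε < 1 / 2)
    (hptbd : ∀ᵐ ω ∂P, ε ≤ pt (Z ω) ∧ pt (Z ω) ≤ 1 - ε)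
    (Ht : Ω → ℝ) (hHt : Ht = fun ω => T ω / pt (Z ω) - (1 - T ω) / (1 - pt (Z ω)))
    (hYint : Integrable Y P)
    (hg0int : Integrable (fun ω => g0 (Z ω)) P) (hg1int : Integrable (fun ω => g1 (Z ω)) P)
    (hgt0int : Integrable (fun ω => gt0 (Z ω)) P)
    (hgt1int : Integrable (fun ω => gt1 (Z ω)) P)
    :
    MeasureTheory.condExp (MeasurableSpace.comap Z inferInstance) P
      (fun ω => Ht ω * (Y ω - (if T ω = 1 then gt1 (Z ω) else gt0 (Z ω)))) =ᵐ[P]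
    (fun ω => (p (Z ω) / pt (Z ω)) * (g1 (Z ω) - gt1 (Z ω)) -
      ((1 - p (Z ω)) / (1 - pt (Z ω))) * (g0 (Z ω) - gt0 (Z ω))) := by
  classical
  -- auxiliary functions
  set a : 𝓩 → ℝ := fun z => (pt z)⁻¹ * (g1 z - gt1 z) with ha_def
  set b : 𝓩 → ℝ := fun z => (1 - pt z)⁻¹ * (g0 z - gt0 z) with hb_def
  set c : 𝓩 → ℝ := fun z => a z + b z with hc_def
  set R : Ω → ℝ := fun ω => Y ω - (if T ω = 1 then g1 (Z ω) else g0 (Z ω)) with hR_def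
  -- basic bounds
  have hTbd : ∀ ω, ‖T ω‖ ≤ 1 := by
    intro ω; rcases hTbin ω with h | h <;> simp [h]
  have hptpos : ∀ᵐ ω ∂P, ε ≤ pt (Z ω) ∧ ε ≤ 1 - pt (Z ω) := by
    filter_upwards [hptbd] with ω ⟨h1, h2⟩
    exact ⟨h1, by linarith⟩
  have hinvbd : ∀ᵐ ω ∂P, ‖(pt (Z ω))⁻¹‖ ≤ ε⁻¹ ∧ ‖(1 - pt (Z ω))⁻¹‖ ≤ ε⁻¹ := by
    filter_upwards [hptpos] with ω ⟨h1, h2⟩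
    have hp1 : 0 < pt (Z ω) := lt_of_lt_of_le hε0 h1
    have hp2 : 0 < 1 - pt (Z ω) := lt_of_lt_of_le hε0 h2
    constructor
    · rw [Real.norm_eq_abs, abs_of_pos (inv_pos.mpr hp1)]
      exact inv_anti₀ hε0 h1
    · rw [Real.norm_eq_abs, abs_of_pos (inv_pos.mpr hp2)]
      exact inv_anti₀ hε0 h2
  -- ambient measurability
  have hHtm : Measurable Ht := by
    rw [hHt]
    exact (hTm.div (hptm.comp hZm)).sub
      ((measurable_const.sub hTm).div (measurable_const.sub (hptm.comp hZm)))
  have hcM : Measurable c :=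
    (hptm.inv.mul (hg1m.sub hgt1m)).add
      ((measurable_const.sub hptm).inv.mul (hg0m.sub hgt0m))
  have hbM : Measurable b := (measurable_const.sub hptm).inv.mul (hg0m.sub hgt0m)
  -- integrability
  have hTint : Integrable T P := by
    have := (integrable_const (μ := P) (1:ℝ)).bdd_mul (c := 1) hTm.aestronglyMeasurable
      (Filter.Eventually.of_forall hTbd)
    simpa using this
  have ha_int : Integrable (fun ω => a (Z ω)) P := by
    refine (hg1int.sub hgt1int).bdd_mul (c := ε⁻¹)
      ((hptm.comp hZm).inv.aestronglyMeasurable) ?_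
    filter_upwards [hinvbd] with ω h using h.1
  have hb_int : Integrable (fun ω => b (Z ω)) P := by
    refine (hg0int.sub hgt0int).bdd_mul (c := ε⁻¹)
      (((measurable_const.sub (hptm.comp hZm)).inv).aestronglyMeasurable) ?_
    filter_upwards [hinvbd] with ω h using h.2
  have hc_int : Integrable (fun ω => c (Z ω)) P := ha_int.add hb_int
  have hcT_int : Integrable (fun ω => c (Z ω) * T ω) P := by
    have := hc_int.bdd_mul (c := 1) hTm.aestronglyMeasurable
      (Filter.Eventually.of_forall hTbd)
    exact this.congr (Filter.Eventually.of_forall fun ω => mul_comm _ _)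
  have hif_int : Integrable (fun ω => (if T ω = 1 then g1 (Z ω) else g0 (Z ω))) P := by
    have hifg : (fun ω => (if T ω = 1 then g1 (Z ω) else g0 (Z ω)))
        = fun ω => T ω * g1 (Z ω) + (1 - T ω) * g0 (Z ω) := by
      funext ω; rcases hTbin ω with h | h
      · rw [h, if_neg (by norm_num)]; ring
      · rw [h, if_pos rfl]; ring
    rw [hifg]
    refine Integrable.add ?_ ?_
    · exact hg1int.bdd_mul hTm.aestronglyMeasurable (Filter.Eventually.of_forall hTbd)
    · refine hg0int.bdd_mul (c := 2)
        ((measurable_const.sub hTm).aestronglyMeasurable) ?_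
      refine Filter.Eventually.of_forall fun ω => ?_
      rcases hTbin ω with h | h <;> rw [h] <;> norm_num
  have hRint : Integrable R P := hYint.sub hif_int
  have hHtbd : ∀ᵐ ω ∂P, ‖Ht ω‖ ≤ 2 * ε⁻¹ := by
    filter_upwards [hinvbd] with ω hω
    obtain ⟨h1, h2⟩ := hω
    simp only [hHt]
    have e1 : ‖T ω / pt (Z ω)‖ ≤ ε⁻¹ := by
      rw [div_eq_mul_inv, norm_mul]
      calc ‖T ω‖ * ‖(pt (Z ω))⁻¹‖ ≤ 1 * ε⁻¹ :=
            mul_le_mul (hTbd ω) h1 (norm_nonneg _) zero_le_one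
        _ = ε⁻¹ := one_mul _
    have e2 : ‖(1 - T ω) / (1 - pt (Z ω))‖ ≤ ε⁻¹ := by
      rw [div_eq_mul_inv, norm_mul]
      have hT1 : ‖1 - T ω‖ ≤ 1 := by rcases hTbin ω with h | h <;> simp [h]
      calc ‖1 - T ω‖ * ‖(1 - pt (Z ω))⁻¹‖ ≤ 1 * ε⁻¹ :=
            mul_le_mul hT1 h2 (norm_nonneg _) zero_le_one
        _ = ε⁻¹ := one_mul _
    calc ‖T ω / pt (Z ω) - (1 - T ω) / (1 - pt (Z ω))‖
        ≤ ‖T ω / pt (Z ω)‖ + ‖(1 - T ω) / (1 - pt (Z ω))‖ := norm_sub_le _ _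
      _ ≤ ε⁻¹ + ε⁻¹ := add_le_add e1 e2
      _ = 2 * ε⁻¹ := by ring
  have hHtR_int : Integrable (fun ω => Ht ω * R ω) P :=
    hRint.bdd_mul hHtm.aestronglyMeasurable hHtbd
  -- sigma algebras
  have hm2_le : MeasurableSpace.comap (fun ω => (T ω, Z ω))
      (inferInstance : MeasurableSpace (ℝ × 𝓩)) ≤ ‹MeasurableSpace Ω› :=
    measurable_iff_comap_le.mp (hTm.prodMk hZm)
  have hpair2 : Measurable[MeasurableSpace.comap (fun ω => (T ω, Z ω))
      (inferInstance : MeasurableSpace (ℝ × 𝓩))] (fun ω => (T ω, Z ω)) :=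
    measurable_iff_comap_le.mpr le_rfl
  have hZm2 : Measurable[MeasurableSpace.comap (fun ω => (T ω, Z ω))
      (inferInstance : MeasurableSpace (ℝ × 𝓩))] Z := measurable_snd.comp hpair2
  have hm_le2 : MeasurableSpace.comap Z (inferInstance : MeasurableSpace 𝓩) ≤
      MeasurableSpace.comap (fun ω => (T ω, Z ω))
        (inferInstance : MeasurableSpace (ℝ × 𝓩)) :=
    measurable_iff_comap_le.mp hZm2
  have hm_le : MeasurableSpace.comap Z (inferInstance : MeasurableSpace 𝓩) ≤
      ‹MeasurableSpace Ω› := hm_le2.trans hm2_le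
  have hZmm : Measurable[MeasurableSpace.comap Z (inferInstance : MeasurableSpace 𝓩)] Z :=
    measurable_iff_comap_le.mpr le_rfl
  set m : MeasurableSpace Ω := MeasurableSpace.comap Z inferInstance with hm_def
  set m2 : MeasurableSpace Ω := MeasurableSpace.comap (fun ω => (T ω, Z ω)) inferInstance
    with hm2_def
  -- Ht is m2-strongly measurable
  have hHtSM : StronglyMeasurable[m2] Ht := by
    have hh : Measurable (fun q : ℝ × 𝓩 => q.1 / pt q.2 - (1 - q.1) / (1 - pt q.2)) :=
      (measurable_fst.div (hptm.comp measurable_snd)).sub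
        ((measurable_const.sub measurable_fst).div
          (measurable_const.sub (hptm.comp measurable_snd)))
    have hM : Measurable[m2] Ht := by rw [hHt]; exact hh.comp hpair2
    exact hM.stronglyMeasurable
  -- pointwise decomposition of the target function
  have hdecomp : (fun ω => Ht ω * (Y ω - (if T ω = 1 then gt1 (Z ω) else gt0 (Z ω))))
      = fun ω => Ht ω * R ω + (c (Z ω) * T ω - b (Z ω)) := by
    funext ω
    simp only [hHt, hR_def, hc_def, ha_def, hb_def]
    rcases hTbin ω with h | h
    · rw [h, if_neg (by norm_num), if_neg (by norm_num)]; ring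
    · rw [h, if_pos rfl, if_pos rfl]; ring
  -- Step A : E[Ht * R | m] = 0
  have hA2 : MeasureTheory.condExp m2 P (fun ω => Ht ω * R ω) =ᵐ[P] 0 := by
    have h1 : MeasureTheory.condExp m2 P (Ht * R) =ᵐ[P] Ht * MeasureTheory.condExp m2 P R :=
      condExp_mul_of_stronglyMeasurable_left hHtSM (by exact hHtR_int) hRint
    have h2 : Ht * MeasureTheory.condExp m2 P R =ᵐ[P] 0 := by
      filter_upwards [hU] with ω hω
      simp only [Pi.mul_apply, Pi.zero_apply] at *
      rw [show MeasureTheory.condExp m2 P R ω = 0 from hω, mul_zero]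
    exact h1.trans h2
  have hA : MeasureTheory.condExp m P (fun ω => Ht ω * R ω) =ᵐ[P] 0 := by
    have ht := condExp_condExp_of_le (μ := P)
      (f := fun ω => Ht ω * R ω) hm_le2 hm2_le
    have h3 : MeasureTheory.condExp m P (MeasureTheory.condExp m2 P (fun ω => Ht ω * R ω))
        =ᵐ[P] MeasureTheory.condExp m P (0 : Ω → ℝ) := condExp_congr_ae hA2
    refine ht.symm.trans (h3.trans ?_)
    rw [condExp_zero]
  -- Step B : E[c(Z) * T | m] = c(Z) * p(Z)
  have hcSM : StronglyMeasurable[m] (fun ω => c (Z ω)) :=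
    (hcM.comp hZmm).stronglyMeasurable
  have hB : MeasureTheory.condExp m P (fun ω => c (Z ω) * T ω) =ᵐ[P]
      fun ω => c (Z ω) * p (Z ω) := by
    have h1 : MeasureTheory.condExp m P ((fun ω => c (Z ω)) * T) =ᵐ[P]
        (fun ω => c (Z ω)) * MeasureTheory.condExp m P T :=
      condExp_mul_of_stronglyMeasurable_left hcSM (by exact hcT_int) hTint
    refine h1.trans ?_
    filter_upwards [hprop] with ω hω
    simp only [Pi.mul_apply]
    rw [← hω]
  -- Step C : E[b(Z) | m] = b(Z)
  have hbSM : StronglyMeasurable[m] (fun ω => b (Z ω)) :=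
    (hbM.comp hZmm).stronglyMeasurable
  have hC : MeasureTheory.condExp m P (fun ω => b (Z ω)) = fun ω => b (Z ω) :=
    condExp_of_stronglyMeasurable (μ := P) hm_le hbSM hb_int
  -- assemble
  rw [hdecomp]
  have hsum : MeasureTheory.condExp m P
      (fun ω => Ht ω * R ω + (c (Z ω) * T ω - b (Z ω))) =ᵐ[P]
      MeasureTheory.condExp m P (fun ω => Ht ω * R ω) +
        (MeasureTheory.condExp m P (fun ω => c (Z ω) * T ω) -
          MeasureTheory.condExp m P (fun ω => b (Z ω))) := by
    have h1 := condExp_add (μ := P) (m := m) hHtR_int (hcT_int.sub hb_int)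
    have h2 := condExp_sub (μ := P) (m := m) hcT_int hb_int
    refine h1.trans ?_
    filter_upwards [h2] with ω hω
    simp only [Pi.add_apply, Pi.sub_apply] at *
    rw [hω]
  refine hsum.trans ?_
  filter_upwards [hA, hB] with ω hA' hB'
  have hA'' : MeasureTheory.condExp m P (fun ω => Ht ω * R ω) ω = 0 := hA'
  have hB'' : MeasureTheory.condExp m P (fun ω => c (Z ω) * T ω) ω = c (Z ω) * p (Z ω) := hB'
  simp only [Pi.add_apply, Pi.sub_apply, hC, hA'', hB'']
  simp only [hc_def, ha_def, hb_def]
  ring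
end
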